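/- arXiv:2304.03976 — 3 statements merged into one kernel-verified Lean document; each statement's English description precedes it below -/
import Mathlib

section
/- Isomorphisms via the swap a ↔ b: Let σ be the linear automorphism of F with σ(ε_i) = ε_i for all i, σ(a) = b, σ(b) = a (an isometry of (F,I)). Then σ maps: R(BCC_l^{(2)}(1)) onto R(BB_l^{∨(1)}) and R(C^∨BC_l^{(2)}(1)) onto R(BB_l^{∨(4)}) (for l ≥ 2); R(BCC_l^{(2)}(2)) onto R(C^∨C_l^{(1)}); R(C^∨BC_l^{(2)}(2)) onto R(C^∨C_l^{(4)}); R(BCC_l^{(2)∗_p}) onto R(C^∨C_l^{(1)∗_p}) and R(C^∨BC_l^{(2)∗_p}) onto R(C^∨C_l^{(4)∗_p}) for p ∈ {0,1}; and R(BB_l^{∨(2)}(2)) onto R(C^∨C_l^{(2)}(1)) (for l ≥ 2). In particular each left-hand set is isomorphic as a root system to the corresponding right-hand set. -/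
open Pointwise

noncomputable section

/-- The ambient space `F = ℝ^{l+2}`, with coordinates `0,…,l-1` for the finite part
and coordinates `l, l+1` corresponding to the radical vectors `a, b`. -/
abbrev V (l : ℕ) : Type := Fin (l + 2) → ℝ

/-- The orthonormal vectors `ε_i`. -/
def εv (l : ℕ) (i : Fin l) : V l := Pi.single (Fin.castAdd 2 i) 1

/-- The radical vector `a`. -/
def av (l : ℕ) : V l := Pi.single (Fin.natAdd l (0 : Fin 2)) 1

/-- The radical vector `b`. -/
def bv (l : ℕ) : V l := Pi.single (Fin.natAdd l (1 : Fin 2)) 1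

/-- The positive semi-definite symmetric bilinear form `I` of signature `(l,2,0)`,
with radical `ℝa + ℝb`. -/
def Iform (l : ℕ) (x y : V l) : ℝ :=
  ∑ i : Fin l, x (Fin.castAdd 2 i) * y (Fin.castAdd 2 i)

/-- Short roots of the finite root system `BC_l`. -/
def BCs (l : ℕ) : Set (V l) := ⋃ i : Fin l, {εv l i, -εv l i}

/-- Middle-length roots of the finite root system `BC_l`. -/
def BCm (l : ℕ) : Set (V l) :=
  ⋃ (i : Fin l) (j : Fin l) (_ : i ≠ j),
    {εv l i + εv l j, εv l i - εv l j, -εv l i - εv l j}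

/-- Long roots of the finite root system `BC_l`. -/
def BCl (l : ℕ) : Set (V l) := ⋃ i : Fin l, {(2 : ℝ) • εv l i, -((2 : ℝ) • εv l i)}

/-- The finite root system `BC_l`. -/
def BCfull (l : ℕ) : Set (V l) := BCs l ∪ BCm l ∪ BCl l

/-- The subset `(kℤ)v` of `F`. -/
def Zv (l : ℕ) (k : ℤ) (v : V l) : Set (V l) := {x | ∃ n : ℤ, x = ((k * n : ℤ) : ℝ) • v}

/-- The subset `(kℤ)a`. -/
def Za (l : ℕ) (k : ℤ) : Set (V l) := Zv l k (av l)

/-- The subset `(kℤ)b`. -/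
def Zb (l : ℕ) (k : ℤ) : Set (V l) := Zv l k (bv l)

/-- The subset `(1+2ℤ)a`. -/
def oddZa (l : ℕ) : Set (V l) := {x | ∃ n : ℤ, x = ((1 + 2 * n : ℤ) : ℝ) • av l}

/-- The subset `L_{i,j}^{s1,s2} = {s2·m·a + s1·n·b : (m-i)(n-j) ≡ 0 mod 2}`;
`L_{i,j} = Lset l i j 1 1`. -/
def Lset (l : ℕ) (i j s1 s2 : ℤ) : Set (V l) :=
  {x | ∃ m n : ℤ, (2 : ℤ) ∣ ((m - i) * (n - j)) ∧
    x = ((s2 * m : ℤ) : ℝ) • av l + ((s1 * n : ℤ) : ℝ) • bv l}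

/-- The subset `{ma + 2nb : m ≡ n mod 2}` occurring in the ◇-type system. -/
def diaL (l : ℕ) : Set (V l) :=
  {x | ∃ m n : ℤ, (2 : ℤ) ∣ (m - n) ∧ x = ((m : ℤ) : ℝ) • av l + ((2 * n : ℤ) : ℝ) • bv l}

/-- The four types of non-reduced affine root systems. -/
inductive AffType | BCC | CvBC | BBv | CvC

/-- First tier number: the multiplier of `ℤb` on the middle part. -/
def tfm : AffType → ℤ | .BCC => 1 | .CvBC => 2 | .BBv => 1 | .CvC => 2

/-- The multiplier of `ℤb` on the long part. -/
def tfl : AffType → ℤ | .BCC => 1 | .CvBC => 4 | .BBv => 2 | .CvC => 2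

/-- Short part of the affine root system `R(X_l)`. -/
def AffS (l : ℕ) (_X : AffType) : Set (V l) := BCs l + Zb l 1

/-- Middle part of the affine root system `R(X_l)`. -/
def AffM (l : ℕ) (X : AffType) : Set (V l) := BCm l + Zb l (tfm X)

/-- Long part of the affine root system `R(X_l)`. -/
def AffL (l : ℕ) (X : AffType) : Set (V l) := BCl l + Zb l (tfl X)

/-- The affine root system `R(X_l)` for `X ∈ {BCC, C^∨BC, BB^∨, C^∨C}`. -/
def Aff (l : ℕ) (X : AffType) : Set (V l) := AffS l X ∪ AffM l X ∪ AffL l X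

/-- The reduced classical types `BC_l^{(1,2)}, BC_l^{(4,2)}, BC_l^{(2,2)σ}(1), BC_l^{(2,2)σ}(2)`
(for `X = BCC, C^∨BC, BB^∨, C^∨C` respectively). -/
def redClassical (l : ℕ) (X : AffType) : Set (V l) :=
  (AffS l X + Za l 1) ∪ (AffM l X + Za l 1) ∪ (AffL l X + oddZa l)

/-- `R(BC_l^{(1,1)∗})`. -/
def RBC11star (l : ℕ) : Set (V l) :=
  (AffS l .BCC + Za l 1) ∪ (AffM l .BCC + Za l 1) ∪ (BCl l + Lset l 1 1 1 1)

/-- `R(BC_l^{(4,4)∗})`. -/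
def RBC44star (l : ℕ) : Set (V l) :=
  (BCs l + Lset l 1 1 1 1) ∪ (AffM l .CvBC + Za l 2) ∪ (AffL l .CvBC + Za l 4)

/-- `R(X_l^{(1)})`. -/
def E1 (l : ℕ) (X : AffType) : Set (V l) := Aff l X + Za l 1

/-- `R(X_l^{(2)}(i))`. -/
def E2 (l : ℕ) (X : AffType) (i : ℤ) : Set (V l) :=
  (AffS l X + Za l 1) ∪ (AffM l X + Za l i) ∪ (AffL l X + Za l 2)

/-- `R(X_l^{(4)})`. -/
def E4 (l : ℕ) (X : AffType) : Set (V l) :=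
  (AffS l X + Za l 1) ∪ (AffM l X + Za l 2) ∪ (AffL l X + Za l 4)

/-- `R(BCC_l^{(1)∗})`-type systems: `BCC1star l 0 0 = R(BCC_l^{(1)∗_0})`,
`BCC1star l 0 1 = R(BCC_l^{(1)∗_{0'}})`, `BCC1star l 1 1 = R(BCC_l^{(1)∗_1}) = R(BC_l^{(1,1)∗})`. -/
def BCC1star (l : ℕ) (i j : ℤ) : Set (V l) :=
  (AffS l .BCC + Za l 1) ∪ (AffM l .BCC + Za l 1) ∪ (BCl l + Lset l i j 1 1)

/-- `R(BCC_l^{(2)∗_p})`. -/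
def BCC2star (l : ℕ) (p : ℤ) : Set (V l) :=
  (AffS l .BCC + Za l 1) ∪ (AffM l .BCC + Za l 2) ∪ (BCl l + Lset l p p 1 2)

/-- `R(C^∨BC_l^{(2)∗_p})`. -/
def CvBC2star (l : ℕ) (p : ℤ) : Set (V l) :=
  (BCs l + Lset l p p 1 1) ∪ (AffM l .CvBC + Za l 2) ∪ (AffL l .CvBC + Za l 2)

/-- `R(C^∨BC_l^{(4)∗})`-type systems: `CvBC4star l 0 0 = R(C^∨BC_l^{(4)∗_0})`,
`CvBC4star l 0 1 = R(C^∨BC_l^{(4)∗_{0'}})`, `CvBC4star l 1 1 = R(C^∨BC_l^{(4)∗_1}) = R(BC_l^{(4,4)∗})`. -/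
def CvBC4star (l : ℕ) (i j : ℤ) : Set (V l) :=
  (BCs l + Lset l i j 1 1) ∪ (AffM l .CvBC + Za l 2) ∪ (AffL l .CvBC + Za l 4)

/-- `R(BB_2^{∨(2)∗})` (its defining pattern, written for general `l`). -/
def BB2star (l : ℕ) : Set (V l) :=
  (BCs l + Za l 1 + Zb l 1) ∪ (BCm l + Lset l 0 0 1 1) ∪ (BCl l + Za l 2 + Zb l 2)

/-- `R(C^∨C_l^{(1)∗_p})`. -/
def CvC1star (l : ℕ) (p : ℤ) : Set (V l) :=
  (AffS l .CvC + Za l 1) ∪ (AffM l .CvC + Za l 1) ∪ (BCl l + Lset l p p 2 1)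

/-- `R(C^∨C_l^{(2)∗})`-type systems: `CvC2star l 0 0 = R(C^∨C_l^{(2)∗_0})`,
`CvC2star l 1 1 = R(C^∨C_l^{(2)∗_1})`, `CvC2star l 1 0 = R(C^∨C_l^{(2)∗_{1'}})`. -/
def CvC2star (l : ℕ) (i j : ℤ) : Set (V l) :=
  (BCs l + Lset l 0 0 1 1) ∪ (AffM l .CvC + Za l 2) ∪ (BCl l + Lset l i j 2 2)

/-- `R(C^∨C_l^{(2)∗_s})`. -/
def CvC2starS (l : ℕ) : Set (V l) :=
  (BCs l + Lset l 0 0 1 1) ∪ (AffM l .CvC + Za l 2) ∪ (AffL l .CvC + Za l 2)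

/-- `R(C^∨C_l^{(2)∗_l})`. -/
def CvC2starL (l : ℕ) : Set (V l) :=
  (AffS l .CvC + Za l 1) ∪ (AffM l .CvC + Za l 2) ∪ (BCl l + Lset l 0 0 2 2)

/-- `R(C^∨C_l^{(4)∗_p})`. -/
def CvC4star (l : ℕ) (p : ℤ) : Set (V l) :=
  (BCs l + Lset l p p 1 1) ∪ (AffM l .CvC + Za l 2) ∪ (AffL l .CvC + Za l 4)

/-- `R(C^∨C_l^{(2)◇})`. -/
def CvC2dia (l : ℕ) : Set (V l) :=
  (AffS l .CvC + Za l 1) ∪ (AffM l .CvC + Za l 1) ∪ (BCl l + diaL l)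

/-- The reflection `w_α`. -/
def reflV (l : ℕ) (α x : V l) : V l := x - (2 * Iform l x α / Iform l α α) • α

/-- A generalized root system in `(F, I)`; since `I` has signature `(l,2,0)`, this is
exactly an elliptic root system. -/
structure IsERS (l : ℕ) (R : Set (V l)) : Prop where
  /-- `R` is discrete. -/
  discrete : ∀ x ∈ R, ∃ ε > 0, ∀ y ∈ R, ‖x - y‖ < ε → y = x
  /-- The root lattice `Q(R)` is full in `F`. -/
  spans : Submodule.span ℝ R = ⊤
  /-- roots are non-isotropic. -/
  nonisotropic : ∀ α ∈ R, Iform l α α ≠ 0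
  /-- integrality: `2 I(α,β)/I(α,α) ∈ ℤ`. -/
  integral : ∀ α ∈ R, ∀ β ∈ R, ∃ n : ℤ, 2 * Iform l α β = (n : ℝ) * Iform l α α
  /-- each reflection `w_α` maps `R` onto `R`. -/
  reflects : ∀ α ∈ R, reflV l α '' R = R
  /-- irreducibility. -/
  irred : ∀ R1 R2 : Set (V l), R1 ∪ R2 = R →
    (∀ x ∈ R1, ∀ y ∈ R2, Iform l x y = 0) → R1 = ∅ ∨ R2 = ∅

/-- `R` is reduced. -/
def IsReducedRS (l : ℕ) (R : Set (V l)) : Prop := ∀ α ∈ R, (2 : ℝ) • α ∉ R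

/-- `R` is non-reduced. -/
def IsNonReducedRS (l : ℕ) (R : Set (V l)) : Prop := ∃ α ∈ R, (2 : ℝ) • α ∈ R

/-- The radical `ℝa + ℝb` of `I`. -/
def radSpan (l : ℕ) : Submodule ℝ (V l) := Submodule.span ℝ {av l, bv l}

/-- The marking line `G = ℝa`. -/
def Ga (l : ℕ) : Submodule ℝ (V l) := Submodule.span ℝ {av l}

/-- `G` is a marking of `R`: a one-dimensional subspace of `rad(I)` such that
`G ∩ Q(R)` is full in `G`. -/
def IsMarking (l : ℕ) (R : Set (V l)) (G : Submodule ℝ (V l)) : Prop :=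
  G ≤ radSpan l ∧ Module.finrank ℝ G = 1 ∧
    ∃ v : V l, v ≠ 0 ∧ v ∈ G ∧ v ∈ AddSubgroup.closure R

/-- `φ` rescales the form `I` by the factor `c`. -/
def IsSimilarity (l : ℕ) (φ : V l ≃ₗ[ℝ] V l) (c : ℝ) : Prop :=
  ∀ x y : V l, Iform l (φ x) (φ y) = c * Iform l x y

/-- Isomorphism of root systems in `(F, I)`. -/
def IsoRS (l : ℕ) (R R' : Set (V l)) : Prop :=
  ∃ (φ : V l ≃ₗ[ℝ] V l) (c : ℝ), 0 < c ∧ IsSimilarity l φ c ∧ φ '' R = R'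

/-- Isomorphism of marked root systems (with marking `ℝa` on both sides). -/
def IsoRSa (l : ℕ) (R R' : Set (V l)) : Prop :=
  ∃ (φ : V l ≃ₗ[ℝ] V l) (c : ℝ), 0 < c ∧ IsSimilarity l φ c ∧
    φ '' (Ga l : Set (V l)) = (Ga l : Set (V l)) ∧ φ '' R = R'

/-- The quotient `R/G` (image of `R` in `F/G`) is non-reduced. -/
def QuotNonReduced (l : ℕ) (R : Set (V l)) (G : Submodule ℝ (V l)) : Prop :=
  ∃ α ∈ R, ∃ β ∈ R, G.mkQ β = (2 : ℝ) • G.mkQ α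

/-- The quotient `R/G` is isomorphic, as an affine root system, to the affine root system
`X ⊆ span(ε_1,…,ε_l,b)`: encoded via `p = ψ ∘ (F → F/G)` for an isomorphism
`ψ : F/G ≅ span(ε_1,…,ε_l,b)` with `Ī(u,v) = c·I(ψu,ψv)` and `ψ(R/G) = X`. -/
def QuotIsType (l : ℕ) (R : Set (V l)) (G : Submodule ℝ (V l)) (X : Set (V l)) : Prop :=
  ∃ (p : V l →ₗ[ℝ] V l) (c : ℝ), 0 < c ∧
    LinearMap.ker p = G ∧
    LinearMap.range p = Submodule.span ℝ (Set.range (εv l) ∪ {bv l}) ∧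
    (∀ x y : V l, Iform l x y = c * Iform l (p x) (p y)) ∧
    p '' R = X

end

noncomputable section


section SwapLemmas
variable {l : ℕ} (σ : V l ≃ₗ[ℝ] V l)

lemma swap_coord (hε : ∀ i : Fin l, σ (εv l i) = εv l i)
    (ha : σ (av l) = bv l) (hb : σ (bv l) = av l) (x : V l) (j : Fin l) :
    σ x (Fin.castAdd 2 j) = x (Fin.castAdd 2 j) := by
  have hx : x = ∑ k : Fin (l + 2), x k • (Pi.single k (1:ℝ) : V l) := by
    ext m
    simp [Finset.sum_apply, Pi.single_apply]
  conv_lhs => rw [hx]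
  rw [map_sum]
  simp only [map_smul]
  rw [Finset.sum_apply]
  rw [Fin.sum_univ_add (f := fun k => (x k • σ (Pi.single k (1:ℝ) : V l)) (Fin.castAdd 2 j))]
  have h1 : ∀ i : Fin l, σ (Pi.single (Fin.castAdd 2 i) (1:ℝ) : V l) = εv l i := fun i => hε i
  have h2 : σ (Pi.single (Fin.natAdd l (0 : Fin 2)) (1:ℝ) : V l) = bv l := ha
  have h3 : σ (Pi.single (Fin.natAdd l (1 : Fin 2)) (1:ℝ) : V l) = av l := hb
  have hne : ∀ k : Fin 2, (Fin.castAdd 2 j : Fin (l+2)) ≠ Fin.natAdd l k := by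
    intro k h
    have : (j : ℕ) = l + (k : ℕ) := congrArg Fin.val h
    have hj := j.isLt
    omega
  rw [Fin.sum_univ_two (f := fun k => (x (Fin.natAdd l k) • σ (Pi.single (Fin.natAdd l k) (1:ℝ) : V l)) (Fin.castAdd 2 j))]
  simp only [h1, h2, h3, Pi.smul_apply, smul_eq_mul]
  rw [show (bv l) (Fin.castAdd 2 j) = 0 from Pi.single_eq_of_ne (hne 1) 1,
      show (av l) (Fin.castAdd 2 j) = 0 from Pi.single_eq_of_ne (hne 0) 1]
  have : ∀ i : Fin l, (εv l i) (Fin.castAdd 2 j) = if i = j then 1 else 0 := by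
    intro i
    by_cases h : i = j
    · subst h; simp [εv]
    · rw [εv, if_neg h]
      refine Pi.single_eq_of_ne (fun hc => h ?_) 1
      have hv := congrArg Fin.val hc
      simp only [Fin.coe_castAdd] at hv
      exact Fin.val_injective hv.symm
  simp [this, Finset.sum_ite_eq']

lemma sim_one (hε : ∀ i : Fin l, σ (εv l i) = εv l i)
    (ha : σ (av l) = bv l) (hb : σ (bv l) = av l) : IsSimilarity l σ 1 := by
  intro x y
  unfold Iform
  rw [one_mul]
  exact Finset.sum_congr rfl fun i _ => by
    rw [swap_coord σ hε ha hb, swap_coord σ hε ha hb]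

lemma img_add (A B : Set (V l)) : σ '' (A + B) = σ '' A + σ '' B := by
  ext y
  constructor
  · rintro ⟨x, ⟨u, hu, v, hv, rfl⟩, rfl⟩
    exact ⟨σ u, ⟨u, hu, rfl⟩, σ v, ⟨v, hv, rfl⟩, (map_add σ u v).symm⟩
  · rintro ⟨u', ⟨u, hu, rfl⟩, v', ⟨v, hv, rfl⟩, rfl⟩
    exact ⟨u + v, ⟨u, hu, v, hv, rfl⟩, map_add σ u v⟩

lemma img_BCs (hε : ∀ i : Fin l, σ (εv l i) = εv l i) : σ '' BCs l = BCs l := by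
  simp only [BCs, Set.image_iUnion, Set.image_insert_eq, Set.image_singleton, map_neg, hε]

lemma img_BCm (hε : ∀ i : Fin l, σ (εv l i) = εv l i) : σ '' BCm l = BCm l := by
  simp only [BCm, Set.image_iUnion, Set.image_insert_eq, Set.image_singleton,
    map_add, map_sub, map_neg, hε]

lemma img_BCl (hε : ∀ i : Fin l, σ (εv l i) = εv l i) : σ '' BCl l = BCl l := by
  simp only [BCl, Set.image_iUnion, Set.image_insert_eq, Set.image_singleton,
    map_neg, map_smul, hε]

lemma img_Za (ha : σ (av l) = bv l) (k : ℤ) : σ '' Za l k = Zb l k := by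
  ext y
  constructor
  · rintro ⟨x, ⟨n, rfl⟩, rfl⟩
    exact ⟨n, by rw [map_smul, ha]⟩
  · rintro ⟨n, rfl⟩
    exact ⟨_, ⟨n, rfl⟩, by rw [map_smul, ha]⟩

lemma img_Zb (hb : σ (bv l) = av l) (k : ℤ) : σ '' Zb l k = Za l k := by
  ext y
  constructor
  · rintro ⟨x, ⟨n, rfl⟩, rfl⟩
    exact ⟨n, by rw [map_smul, hb]⟩
  · rintro ⟨n, rfl⟩
    exact ⟨_, ⟨n, rfl⟩, by rw [map_smul, hb]⟩

lemma img_L (ha : σ (av l) = bv l) (hb : σ (bv l) = av l) (p s1 s2 : ℤ) :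
    σ '' Lset l p p s1 s2 = Lset l p p s2 s1 := by
  ext y
  constructor
  · rintro ⟨x, ⟨m, n, hdvd, rfl⟩, rfl⟩
    refine ⟨n, m, by rwa [mul_comm] at hdvd, ?_⟩
    rw [map_add, map_smul, map_smul, ha, hb]
    exact add_comm _ _
  · rintro ⟨m, n, hdvd, rfl⟩
    refine ⟨((s2 * n : ℤ) : ℝ) • av l + ((s1 * m : ℤ) : ℝ) • bv l,
      ⟨n, m, by rwa [mul_comm] at hdvd, rfl⟩, ?_⟩
    rw [map_add, map_smul, map_smul, ha, hb]
    exact add_comm _ _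

lemma swap_ab (A : Set (V l)) (m n : ℤ) :
    A + Za l m + Zb l n = A + Zb l n + Za l m := add_right_comm _ _ _

end SwapLemmas

/-- **Isomorphisms via the swap `a ↔ b`.** -/
theorem isomorphisms_via_swap
    {l : ℕ} (hl : 1 ≤ l) (σ : V l ≃ₗ[ℝ] V l)
    (hε : ∀ i : Fin l, σ (εv l i) = εv l i)
    (ha : σ (av l) = bv l) (hb : σ (bv l) = av l) :
    IsSimilarity l σ 1 ∧
    (2 ≤ l → σ '' E2 l .BCC 1 = E1 l .BBv ∧ σ '' E2 l .CvBC 1 = E4 l .BBv) ∧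
    σ '' E2 l .BCC 2 = E1 l .CvC ∧
    σ '' E2 l .CvBC 2 = E4 l .CvC ∧
    (∀ p : ℤ, p = 0 ∨ p = 1 →
      σ '' BCC2star l p = CvC1star l p ∧ σ '' CvBC2star l p = CvC4star l p) ∧
    (2 ≤ l → σ '' E2 l .BBv 2 = E2 l .CvC 1) ∧
    (2 ≤ l → IsoRS l (E2 l .BCC 1) (E1 l .BBv) ∧ IsoRS l (E2 l .CvBC 1) (E4 l .BBv) ∧
      IsoRS l (E2 l .BBv 2) (E2 l .CvC 1)) ∧
    IsoRS l (E2 l .BCC 2) (E1 l .CvC) ∧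
    IsoRS l (E2 l .CvBC 2) (E4 l .CvC) ∧
    (∀ p : ℤ, p = 0 ∨ p = 1 →
      IsoRS l (BCC2star l p) (CvC1star l p) ∧ IsoRS l (CvBC2star l p) (CvC4star l p)) := by
  have hsim : IsSimilarity l σ 1 := sim_one σ hε ha hb
  have h1 : σ '' E2 l .BCC 1 = E1 l .BBv := by
    simp only [E2, E1, Aff, AffS, AffM, AffL, tfm, tfl, Set.union_add, Set.image_union,
      img_add σ, img_BCs σ hε, img_BCm σ hε, img_BCl σ hε, img_Za σ ha, img_Zb σ hb]
    simp only [swap_ab]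
  have h2 : σ '' E2 l .CvBC 1 = E4 l .BBv := by
    simp only [E2, E4, AffS, AffM, AffL, tfm, tfl, Set.image_union,
      img_add σ, img_BCs σ hε, img_BCm σ hε, img_BCl σ hε, img_Za σ ha, img_Zb σ hb]
    simp only [swap_ab]
  have h3 : σ '' E2 l .BCC 2 = E1 l .CvC := by
    simp only [E2, E1, Aff, AffS, AffM, AffL, tfm, tfl, Set.union_add, Set.image_union,
      img_add σ, img_BCs σ hε, img_BCm σ hε, img_BCl σ hε, img_Za σ ha, img_Zb σ hb]
    simp only [swap_ab]
  have h4 : σ '' E2 l .CvBC 2 = E4 l .CvC := by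
    simp only [E2, E4, AffS, AffM, AffL, tfm, tfl, Set.image_union,
      img_add σ, img_BCs σ hε, img_BCm σ hε, img_BCl σ hε, img_Za σ ha, img_Zb σ hb]
    simp only [swap_ab]
  have h5 : ∀ p : ℤ, σ '' BCC2star l p = CvC1star l p := by
    intro p
    simp only [BCC2star, CvC1star, AffS, AffM, AffL, tfm, tfl, Set.image_union,
      img_add σ, img_BCs σ hε, img_BCm σ hε, img_BCl σ hε, img_Za σ ha, img_Zb σ hb,
      img_L σ ha hb]
    simp only [swap_ab]
  have h6 : ∀ p : ℤ, σ '' CvBC2star l p = CvC4star l p := by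
    intro p
    simp only [CvBC2star, CvC4star, AffS, AffM, AffL, tfm, tfl, Set.image_union,
      img_add σ, img_BCs σ hε, img_BCm σ hε, img_BCl σ hε, img_Za σ ha, img_Zb σ hb,
      img_L σ ha hb]
    simp only [swap_ab]
  have h7 : σ '' E2 l .BBv 2 = E2 l .CvC 1 := by
    simp only [E2, AffS, AffM, AffL, tfm, tfl, Set.image_union,
      img_add σ, img_BCs σ hε, img_BCm σ hε, img_BCl σ hε, img_Za σ ha, img_Zb σ hb]
    simp only [swap_ab]
  exact ⟨hsim, fun _ => ⟨h1, h2⟩, h3, h4, fun p _ => ⟨h5 p, h6 p⟩, fun _ => h7,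
    fun _ => ⟨⟨σ, 1, one_pos, hsim, h1⟩, ⟨σ, 1, one_pos, hsim, h2⟩,
      ⟨σ, 1, one_pos, hsim, h7⟩⟩,
    ⟨σ, 1, one_pos, hsim, h3⟩, ⟨σ, 1, one_pos, hsim, h4⟩,
    fun p _ => ⟨⟨σ, 1, one_pos, hsim, h5 p⟩, ⟨σ, 1, one_pos, hsim, h6 p⟩⟩⟩


end
end

section
/- Exotic isomorphisms: The three elliptic root systems R(BCC_l^{(4)}), R(C^∨BC_l^{(1)}), and R(C^∨C_l^{(2)◇}) are pairwise isomorphic as root systems; that is, for each pair there exist a linear automorphism φ of F and c > 0 with I(φ(x),φ(y)) = c·I(x,y) for all x,y ∈ F carrying one set onto the other. -/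
open Pointwise

noncomputable section AuxEx

namespace AuxEx

variable {l : ℕ}

/-- index of `a` -/
abbrev aI (l : ℕ) : Fin (l + 2) := Fin.natAdd l (0 : Fin 2)
/-- index of `b` -/
abbrev bI (l : ℕ) : Fin (l + 2) := Fin.natAdd l (1 : Fin 2)

lemma castAdd_ne (i : Fin l) (j : Fin 2) : (Fin.castAdd 2 i) ≠ Fin.natAdd l j := by
  have hi := i.isLt
  apply Fin.ne_of_val_ne
  simp
  omega

lemma aI_ne_bI : aI l ≠ bI l := by
  simp [Fin.ext_iff]

/-- The automorphism swapping `a` and `b`. -/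
def swapE (l : ℕ) : V l ≃ₗ[ℝ] V l where
  toFun x := x ∘ Equiv.swap (aI l) (bI l)
  invFun x := x ∘ Equiv.swap (aI l) (bI l)
  map_add' _ _ := rfl
  map_smul' _ _ := rfl
  left_inv x := by funext j; simp [Function.comp, Equiv.swap_apply_self]
  right_inv x := by funext j; simp [Function.comp, Equiv.swap_apply_self]

@[simp] lemma swapE_apply (x : V l) (j : Fin (l + 2)) :
    swapE l x j = x (Equiv.swap (aI l) (bI l) j) := rfl

lemma swapE_single (k : Fin (l + 2)) (c : ℝ) :
    swapE l (Pi.single k c) = Pi.single (Equiv.swap (aI l) (bI l) k) c := by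
  funext j
  rw [swapE_apply, Pi.single_apply, Pi.single_apply]
  by_cases h : j = Equiv.swap (aI l) (bI l) k
  · subst h; simp [Equiv.swap_apply_self]
  · rw [if_neg h, if_neg]
    intro hc
    exact h (by rw [← hc, Equiv.swap_apply_self])

lemma swapE_eps (i : Fin l) : swapE l (εv l i) = εv l i := by
  rw [εv, swapE_single, Equiv.swap_apply_of_ne_of_ne (castAdd_ne i 0) (castAdd_ne i 1)]

lemma swapE_a : swapE l (av l) = bv l := by
  rw [av, swapE_single, Equiv.swap_apply_left]; rfl

lemma swapE_b : swapE l (bv l) = av l := by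
  rw [bv, swapE_single, Equiv.swap_apply_right]; rfl

/-- The shear `a ↦ a + 2b`, `b ↦ b`, `ε_i ↦ ε_i`. -/
def shearE (l : ℕ) : V l ≃ₗ[ℝ] V l where
  toFun x := fun j => x j + (if j = bI l then 2 * x (aI l) else 0)
  invFun x := fun j => x j - (if j = bI l then 2 * x (aI l) else 0)
  map_add' x y := by
    funext j; by_cases h : j = bI l <;> simp [h] <;> try ring
  map_smul' c x := by
    funext j; by_cases h : j = bI l <;> simp [h] <;> try ring
  left_inv x := by
    funext j
    by_cases h : j = bI l
    · subst h; simp [aI_ne_bI]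
    · simp [h]
  right_inv x := by
    funext j
    by_cases h : j = bI l
    · subst h; simp [aI_ne_bI]
    · simp [h]

@[simp] lemma shearE_apply (x : V l) (j : Fin (l + 2)) :
    shearE l x j = x j + (if j = bI l then 2 * x (aI l) else 0) := rfl

lemma shearE_eps (i : Fin l) : shearE l (εv l i) = εv l i := by
  funext j
  rw [shearE_apply, εv, Pi.single_eq_of_ne (Ne.symm (castAdd_ne i 0))]
  simp

lemma shearE_b : shearE l (bv l) = bv l := by
  funext j
  rw [shearE_apply, bv, Pi.single_eq_of_ne (aI_ne_bI)]
  simp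

lemma shearE_a : shearE l (av l) = av l + (2 : ℝ) • bv l := by
  funext j
  rw [shearE_apply, av]
  by_cases h : j = bI l
  · subst h
    rw [Pi.single_eq_same, if_pos rfl]
    simp [av, bv, Pi.single_eq_of_ne (Ne.symm aI_ne_bI), Pi.single_eq_same]
  · rw [if_neg h]
    have : ((2 : ℝ) • bv l) j = 0 := by
      simp [bv, Pi.single_eq_of_ne h]
    simp [av, this]

/-- image of a pointwise sum under a linear equivalence. -/
lemma image_addset (f : V l ≃ₗ[ℝ] V l) (A B : Set (V l)) :
    f '' (A + B) = f '' A + f '' B := by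
  ext x
  simp only [Set.mem_image, Set.mem_add]
  constructor
  · rintro ⟨z, ⟨u, hu, v, hv, rfl⟩, rfl⟩
    exact ⟨f u, ⟨u, hu, rfl⟩, f v, ⟨v, hv, rfl⟩, (map_add f u v).symm⟩
  · rintro ⟨_, ⟨u, hu, rfl⟩, _, ⟨v, hv, rfl⟩, rfl⟩
    exact ⟨u + v, ⟨u, hu, v, hv, rfl⟩, map_add f u v⟩

lemma image_Zv (f : V l ≃ₗ[ℝ] V l) (k : ℤ) (v : V l) :
    f '' Zv l k v = Zv l k (f v) := by
  ext x
  simp only [Zv, Set.mem_image, Set.mem_setOf_eq]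
  constructor
  · rintro ⟨y, ⟨n, rfl⟩, rfl⟩; exact ⟨n, by rw [map_smul]⟩
  · rintro ⟨n, rfl⟩; exact ⟨_ • v, ⟨n, rfl⟩, by rw [map_smul]⟩

lemma image_BCs (f : V l ≃ₗ[ℝ] V l) (hf : ∀ i, f (εv l i) = εv l i) :
    f '' BCs l = BCs l := by
  simp only [BCs, Set.image_iUnion, Set.image_pair, map_neg, hf]

lemma image_BCm (f : V l ≃ₗ[ℝ] V l) (hf : ∀ i, f (εv l i) = εv l i) :
    f '' BCm l = BCm l := by
  simp only [BCm, Set.image_iUnion, Set.image_insert_eq, Set.image_singleton,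
    map_add, map_sub, map_neg, hf]

lemma image_BCl (f : V l ≃ₗ[ℝ] V l) (hf : ∀ i, f (εv l i) = εv l i) :
    f '' BCl l = BCl l := by
  simp only [BCl, Set.image_iUnion, Set.image_pair, map_neg, map_smul, hf]

lemma sim_swapE : IsSimilarity l (swapE l) 1 := by
  intro x y
  unfold Iform
  rw [one_mul]
  refine Finset.sum_congr rfl fun i _ => ?_
  rw [swapE_apply, swapE_apply,
    Equiv.swap_apply_of_ne_of_ne (castAdd_ne i 0) (castAdd_ne i 1)]

lemma sim_shearE : IsSimilarity l (shearE l) 1 := by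
  intro x y
  unfold Iform
  rw [one_mul]
  refine Finset.sum_congr rfl fun i _ => ?_
  rw [shearE_apply, shearE_apply, if_neg (castAdd_ne i 1), if_neg (castAdd_ne i 1)]
  ring

lemma A1_lemma : Zb l 1 + Zv l 1 (av l + (2 : ℝ) • bv l) = Zb l 1 + Za l 1 := by
  ext x
  simp only [Zb, Za, Zv, Set.mem_add, Set.mem_setOf_eq]
  constructor
  · rintro ⟨_, ⟨m, rfl⟩, _, ⟨n, rfl⟩, rfl⟩
    refine ⟨_, ⟨m + 2 * n, rfl⟩, _, ⟨n, rfl⟩, ?_⟩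
    push_cast
    match_scalars <;> ring
  · rintro ⟨_, ⟨m, rfl⟩, _, ⟨n, rfl⟩, rfl⟩
    refine ⟨_, ⟨m - 2 * n, rfl⟩, _, ⟨n, rfl⟩, ?_⟩
    push_cast
    match_scalars <;> ring

lemma A2_lemma : Zb l 2 + Zv l 1 (av l + (2 : ℝ) • bv l) = Zb l 2 + Za l 1 := by
  ext x
  simp only [Zb, Za, Zv, Set.mem_add, Set.mem_setOf_eq]
  constructor
  · rintro ⟨_, ⟨m, rfl⟩, _, ⟨n, rfl⟩, rfl⟩
    refine ⟨_, ⟨m + n, rfl⟩, _, ⟨n, rfl⟩, ?_⟩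
    push_cast
    match_scalars <;> ring
  · rintro ⟨_, ⟨m, rfl⟩, _, ⟨n, rfl⟩, rfl⟩
    refine ⟨_, ⟨m - n, rfl⟩, _, ⟨n, rfl⟩, ?_⟩
    push_cast
    match_scalars <;> ring

lemma C_lemma : Zb l 4 + Zv l 1 (av l + (2 : ℝ) • bv l) = diaL l := by
  ext x
  simp only [Zb, Zv, diaL, Set.mem_add, Set.mem_setOf_eq]
  constructor
  · rintro ⟨_, ⟨m, rfl⟩, _, ⟨n, rfl⟩, rfl⟩
    refine ⟨n, 2 * m + n, ⟨-m, by ring⟩, ?_⟩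
    push_cast
    match_scalars <;> ring
  · rintro ⟨m, n, ⟨c, hc⟩, rfl⟩
    refine ⟨_, ⟨-c, rfl⟩, _, ⟨m, rfl⟩, ?_⟩
    have hcR : (m : ℝ) - n = 2 * c := by exact_mod_cast hc
    push_cast
    match_scalars <;> linarith [hcR]

lemma comm3 (A X Y : Set (V l)) : A + X + Y = A + Y + X := add_right_comm _ _ _

lemma swap_image : swapE l '' E4 l .BCC = E1 l .CvBC := by
  have h0 : ∀ k : ℤ, swapE l '' Zb l k = Za l k := fun k => by
    rw [Zb, image_Zv, swapE_b]; rfl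
  have h1 : ∀ k : ℤ, swapE l '' Za l k = Zb l k := fun k => by
    rw [Za, image_Zv, swapE_a]; rfl
  rw [E4, E1, Aff, AffS, AffM, AffL]
  rw [Set.union_add, Set.union_add]
  simp only [Set.image_union, image_addset, image_BCs _ swapE_eps,
    image_BCm _ swapE_eps, image_BCl _ swapE_eps, h0, h1]
  rw [comm3 (BCs l), comm3 (BCm l), comm3 (BCl l)]
  rfl

lemma shear_image : shearE l '' E1 l .CvBC = CvC2dia l := by
  have h0 : ∀ k : ℤ, shearE l '' Zb l k = Zb l k := fun k => by
    rw [Zb, image_Zv, shearE_b]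
  have h1 : shearE l '' Za l 1 = Zv l 1 (av l + (2 : ℝ) • bv l) := by
    rw [Za, image_Zv, shearE_a]
  rw [E1, Aff, AffS, AffM, AffL, CvC2dia, AffS, AffM]
  rw [Set.union_add, Set.union_add]
  simp only [Set.image_union, image_addset, image_BCs _ shearE_eps,
    image_BCm _ shearE_eps, image_BCl _ shearE_eps, h0, h1, tfm, tfl]
  rw [add_assoc (BCs l), add_assoc (BCm l), add_assoc (BCl l),
    A1_lemma, A2_lemma, C_lemma,
    ← add_assoc (BCs l), ← add_assoc (BCm l)]

end AuxEx

end AuxEx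

noncomputable section

open AuxEx in
/-- **Exotic isomorphisms**: `R(BCC_l^{(4)}) ≅ R(C^∨BC_l^{(1)}) ≅ R(C^∨C_l^{(2)◇})`
are pairwise isomorphic as root systems. -/
theorem exotic_isomorphisms {l : ℕ} (hl : 1 ≤ l) :
    IsoRS l (E4 l .BCC) (E1 l .CvBC) ∧
    IsoRS l (E1 l .CvBC) (CvC2dia l) ∧
    IsoRS l (E4 l .BCC) (CvC2dia l) := by
  refine ⟨⟨swapE l, 1, one_pos, sim_swapE, swap_image⟩,
    ⟨shearE l, 1, one_pos, sim_shearE, shear_image⟩,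
    ⟨(swapE l).trans (shearE l), 1, one_pos, ?_, ?_⟩⟩
  · intro x y
    have h1 := sim_shearE (l := l) (swapE l x) (swapE l y)
    have h2 := sim_swapE (l := l) x y
    simpa [h2] using h1
  · rw [show ⇑((swapE l).trans (shearE l)) = ⇑(shearE l) ∘ ⇑(swapE l) from rfl,
      Set.image_comp, swap_image, shear_image]

end
end

section
/- Well-definedness of the reduced ∗-types (Azam's systems): The sets R(BC_l^{(1,1)∗}) = (R(BCC_l)_s + ℤa) ∪ (R(BCC_l)_m + ℤa) ∪ (R(BC_l)_l + L_{1,1}) and R(BC_l^{(4,4)∗}) = (R(BC_l)_s + L_{1,1}) ∪ (R(C^∨BC_l)_m + 2ℤa) ∪ (R(C^∨BC_l)_l + 4ℤa) are reduced elliptic root systems in (F,I), ℝa is a marking of each, and their quotients modulo ℝa are the images of R(BCC_l) and R(C^∨BC_l) respectively; in particular both quotients are non-reduced. -/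
open Pointwise

open Pointwise
noncomputable section
namespace StarAux
variable {l : ℕ}

lemma castAdd_ne_natAdd (i : Fin l) (j : Fin 2) :
    Fin.castAdd 2 i = Fin.natAdd l j → False := by
  intro h
  have := congrArg Fin.val h
  simp [Fin.castAdd, Fin.natAdd, Fin.castLE] at this
  omega

/-- finite-part embedding -/
def emb (l : ℕ) (f : Fin l → ℤ) : V l := Fin.addCases (fun i => (f i : ℝ)) (fun _ => 0)

/-- radical part -/
def rad (l : ℕ) (p : ℤ × ℤ) : V l := ((p.1 : ℝ)) • av l + ((p.2 : ℝ)) • bv l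

@[simp] lemma emb_castAdd (f : Fin l → ℤ) (i : Fin l) :
    emb l f (Fin.castAdd 2 i) = (f i : ℝ) := by simp [emb]

@[simp] lemma emb_natAdd (f : Fin l → ℤ) (j : Fin 2) :
    emb l f (Fin.natAdd l j) = 0 := by simp [emb]

@[simp] lemma av_castAdd (i : Fin l) : av l (Fin.castAdd 2 i) = 0 :=
  Pi.single_eq_of_ne (fun h => castAdd_ne_natAdd i _ h) 1

@[simp] lemma bv_castAdd (i : Fin l) : bv l (Fin.castAdd 2 i) = 0 :=
  Pi.single_eq_of_ne (fun h => castAdd_ne_natAdd i _ h) 1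

@[simp] lemma rad_castAdd (p : ℤ × ℤ) (i : Fin l) : rad l p (Fin.castAdd 2 i) = 0 := by
  simp [rad]

@[simp] lemma av_natAdd (j : Fin 2) : av l (Fin.natAdd l j) = if j = 0 then 1 else 0 := by
  rcases Fin.exists_fin_two.mp ⟨j, rfl⟩ with h | h <;> subst h <;>
    simp [av, Pi.single_apply, Fin.ext_iff, Fin.natAdd]

@[simp] lemma bv_natAdd (j : Fin 2) : bv l (Fin.natAdd l j) = if j = 1 then 1 else 0 := by
  rcases Fin.exists_fin_two.mp ⟨j, rfl⟩ with h | h <;> subst h <;>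
    simp [bv, Pi.single_apply, Fin.ext_iff, Fin.natAdd]

@[simp] lemma rad_natAdd_zero (p : ℤ × ℤ) : rad l p (Fin.natAdd l 0) = (p.1 : ℝ) := by
  simp [rad]

@[simp] lemma rad_natAdd_one (p : ℤ × ℤ) : rad l p (Fin.natAdd l 1) = (p.2 : ℝ) := by
  simp [rad]

lemma castAdd_inj {i i' : Fin l} (h : Fin.castAdd 2 i' = Fin.castAdd 2 i) : i' = i :=
  Fin.ext (by simpa using congrArg Fin.val h)

@[simp] lemma εv_castAdd (i i' : Fin l) :
    εv l i (Fin.castAdd 2 i') = if i' = i then 1 else 0 := by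
  by_cases h : i' = i
  · subst h; simp [εv]
  · rw [if_neg h, εv, Pi.single_eq_of_ne (fun hc => h (castAdd_inj hc)) 1]

@[simp] lemma εv_natAdd (i : Fin l) (j : Fin 2) : εv l i (Fin.natAdd l j) = 0 :=
  Pi.single_eq_of_ne (fun h => castAdd_ne_natAdd i j h.symm) 1

lemma εv_eq_emb (i : Fin l) : εv l i = emb l (Pi.single i 1) := by
  funext j
  refine Fin.addCases (fun i' => ?_) (fun j' => ?_) j
  · simp [Pi.single_apply, eq_comm]
  · simp

lemma Iform_emb_rad (f g : Fin l → ℤ) (p q : ℤ × ℤ) :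
    Iform l (emb l f + rad l p) (emb l g + rad l q) = ((∑ i, f i * g i : ℤ) : ℝ) := by
  simp [Iform]

lemma emb_rad_eq_iff {f g : Fin l → ℤ} {p q : ℤ × ℤ} :
    emb l f + rad l p = emb l g + rad l q ↔ f = g ∧ p = q := by
  constructor
  · intro h
    have hc : ∀ i, f i = g i := fun i => by
      have := congrFun h (Fin.castAdd 2 i); simp at this; exact_mod_cast this
    have h1 := congrFun h (Fin.natAdd l 0)
    have h2 := congrFun h (Fin.natAdd l 1)
    simp at h1 h2
    exact ⟨funext hc, Prod.ext (by exact_mod_cast h1) (by exact_mod_cast h2)⟩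
  · rintro ⟨rfl, rfl⟩; rfl

end StarAux
namespace StarAux
variable {l : ℕ}

lemma sq_ne_two (x : ℤ) : x * x ≠ 2 := by
  intro hc
  rcases (by omega : x ≤ -2 ∨ x = -1 ∨ x = 0 ∨ x = 1 ∨ 2 ≤ x) with h|h|h|h|h <;> nlinarith

/-- integer vectors of norm 1 are `± e_i` -/
lemma norm_one_char (f : Fin l → ℤ) (h : ∑ i, f i * f i = 1) :
    ∃ i : Fin l, (f i = 1 ∨ f i = -1) ∧ f = Pi.single i (f i) := by
  have hex : ∃ i, f i ≠ 0 := by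
    by_contra hc
    push_neg at hc
    simp only [hc] at h; simp at h
  obtain ⟨i, hi⟩ := hex
  have h1 : 1 ≤ f i * f i := by rcases lt_or_gt_of_ne hi with h'|h' <;> nlinarith
  have htot : f i * f i + ∑ j ∈ Finset.univ.erase i, f j * f j = 1 := by
    exact (Finset.add_sum_erase Finset.univ (fun j => f j * f j) (Finset.mem_univ i)).trans h
  have hge : (0:ℤ) ≤ ∑ j ∈ Finset.univ.erase i, f j * f j :=
    Finset.sum_nonneg (fun j _ => mul_self_nonneg _)
  have hz : ∑ j ∈ Finset.univ.erase i, f j * f j = 0 := by omega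
  have hrest0 := (Finset.sum_eq_zero_iff_of_nonneg (fun j _ => mul_self_nonneg (f j))).mp hz
  have hfj : ∀ j, j ≠ i → f j = 0 := fun j hj =>
    mul_self_eq_zero.mp (hrest0 j (Finset.mem_erase.mpr ⟨hj, Finset.mem_univ j⟩))
  have hfi : f i * f i = 1 := by omega
  refine ⟨i, mul_self_eq_one_iff.mp hfi, funext fun j => ?_⟩
  by_cases hji : j = i
  · subst hji; simp
  · rw [Pi.single_eq_of_ne hji, hfj j hji]

/-- integer vectors of norm 2 are `± e_i ± e_j` -/
lemma norm_two_char (f : Fin l → ℤ) (h : ∑ i, f i * f i = 2) :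
    ∃ i j : Fin l, i ≠ j ∧ (f i = 1 ∨ f i = -1) ∧ (f j = 1 ∨ f j = -1) ∧
      f = Pi.single i (f i) + Pi.single j (f j) := by
  have hex : ∃ i, f i ≠ 0 := by
    by_contra hc
    push_neg at hc
    simp only [hc] at h; simp at h
  obtain ⟨i, hi⟩ := hex
  have h1 : 1 ≤ f i * f i := by rcases lt_or_gt_of_ne hi with h'|h' <;> nlinarith
  have htot : f i * f i + ∑ j ∈ Finset.univ.erase i, f j * f j = 2 := by
    exact (Finset.add_sum_erase Finset.univ (fun j => f j * f j) (Finset.mem_univ i)).trans h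
  have hge : (0:ℤ) ≤ ∑ j ∈ Finset.univ.erase i, f j * f j :=
    Finset.sum_nonneg (fun j _ => mul_self_nonneg _)
  have hfi : f i * f i = 1 := by
    have := sq_ne_two (f i); omega
  set g : Fin l → ℤ := Function.update f i 0 with hg
  have hgi : g i = 0 := Function.update_self i 0 f
  have hsumg : ∑ j, g j * g j = 1 := by
    have he : ∑ j, g j * g j = g i * g i + ∑ j ∈ Finset.univ.erase i, g j * g j :=
      (Finset.add_sum_erase Finset.univ (fun j => g j * g j) (Finset.mem_univ i)).symm
    have he2 : ∑ j ∈ Finset.univ.erase i, g j * g j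
        = ∑ j ∈ Finset.univ.erase i, f j * f j :=
      Finset.sum_congr rfl (fun j hj => by
        rw [hg, Function.update_of_ne (Finset.mem_erase.mp hj).1])
    rw [he, he2, hgi]; omega
  obtain ⟨j, hj1, hj2⟩ := norm_one_char g hsumg
  have hjne : j ≠ i := by
    intro hc; subst hc; omega
  have hgj : g j = f j := Function.update_of_ne hjne 0 f
  rw [hgj] at hj1 hj2
  refine ⟨i, j, fun hc => hjne hc.symm, mul_self_eq_one_iff.mp hfi, hj1,
    funext fun m => ?_⟩
  rw [Pi.add_apply]
  by_cases hmi : m = i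
  · subst hmi
    rw [Pi.single_eq_same, Pi.single_eq_of_ne (Ne.symm hjne)]; omega
  · have hfm : f m = g m := (Function.update_of_ne hmi 0 f).symm
    rw [Pi.single_eq_of_ne hmi]
    have := congrFun hj2 m
    rw [hfm, this]; omega

end StarAux
namespace StarAux
variable {l : ℕ}

lemma emb_add (f g : Fin l → ℤ) : emb l (f + g) = emb l f + emb l g := by
  funext j
  refine Fin.addCases (fun i => ?_) (fun j' => ?_) j <;> simp

lemma emb_neg (f : Fin l → ℤ) : emb l (-f) = -emb l f := by
  funext j
  refine Fin.addCases (fun i => ?_) (fun j' => ?_) j <;> simp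

lemma emb_sub_zsmul (g f : Fin l → ℤ) (k : ℤ) :
    emb l (g - k • f) = emb l g - (k : ℝ) • emb l f := by
  funext j
  refine Fin.addCases (fun i => ?_) (fun j' => ?_) j <;> simp

lemma rad_sub_zsmul (q p : ℤ × ℤ) (k : ℤ) :
    rad l (q.1 - k * p.1, q.2 - k * p.2) = rad l q - (k : ℝ) • rad l p := by
  simp only [rad]
  push_cast
  module

lemma single_neg_one (i : Fin l) :
    (Pi.single i (-1:ℤ) : Fin l → ℤ) = -(Pi.single i (1:ℤ) : Fin l → ℤ) := by
  funext j
  simp only [Pi.neg_apply, Pi.single_apply]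
  rcases eq_or_ne j i with rfl | hji
  · simp
  · simp [hji]

lemma sum_single (i : Fin l) (s : ℤ) :
    ∑ j, (Pi.single i s : Fin l → ℤ) j = s := by
  simp [Pi.single_apply]

lemma sum_single_sq (i : Fin l) (s : ℤ) :
    ∑ j, (Pi.single i s : Fin l → ℤ) j * (Pi.single i s : Fin l → ℤ) j = s * s := by
  simp only [Pi.single_apply, ite_mul, zero_mul]
  simp

lemma sum_pair_sq {i k : Fin l} (h : i ≠ k) (s t : ℤ) :
    ∑ j, ((Pi.single i s + Pi.single k t : Fin l → ℤ) j
      * (Pi.single i s + Pi.single k t : Fin l → ℤ) j) = s * s + t * t := by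
  have key : ∀ j, ((Pi.single i s + Pi.single k t : Fin l → ℤ) j
      * (Pi.single i s + Pi.single k t : Fin l → ℤ) j)
      = (Pi.single i (s*s) : Fin l → ℤ) j + (Pi.single k (t*t) : Fin l → ℤ) j := by
    intro j
    simp only [Pi.add_apply, Pi.single_apply]
    rcases eq_or_ne j i with rfl | hji
    · have hk : j ≠ k := h
      simp [hk]
    · rcases eq_or_ne j k with rfl | hjk
      · simp [hji]
      · simp [hji, hjk]
  rw [Finset.sum_congr rfl (fun j _ => key j), Finset.sum_add_distrib, sum_single, sum_single]

/-- characterization of `BCs` -/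
lemma BCs_eq : BCs l = {x | ∃ f : Fin l → ℤ, (∑ i, f i * f i) = 1 ∧ x = emb l f} := by
  ext x
  constructor
  · intro hx
    rw [BCs] at hx
    obtain ⟨S, ⟨i, rfl⟩, hxS⟩ := hx
    rcases hxS with rfl | rfl
    · exact ⟨Pi.single i 1, by rw [sum_single_sq]; norm_num, εv_eq_emb i⟩
    · refine ⟨Pi.single i (-1), by rw [sum_single_sq]; norm_num, ?_⟩
      rw [single_neg_one, emb_neg, ← εv_eq_emb]
  · rintro ⟨f, hf, rfl⟩
    obtain ⟨i, hs, hf2⟩ := norm_one_char f hf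
    rw [BCs]
    refine Set.mem_iUnion.mpr ⟨i, ?_⟩
    rcases hs with h1 | h1
    · rw [hf2, h1, ← εv_eq_emb]; exact Set.mem_insert _ _
    · rw [hf2, h1, single_neg_one, emb_neg, ← εv_eq_emb]
      exact Set.mem_insert_iff.mpr (Or.inr rfl)

end StarAux
namespace StarAux
variable {l : ℕ}

lemma emb_single (i : Fin l) (s : ℤ) :
    emb l (Pi.single i s) = (s : ℝ) • εv l i := by
  funext j
  refine Fin.addCases (fun i' => ?_) (fun j' => ?_) j
  · simp only [emb_castAdd, Pi.smul_apply, εv_castAdd, Pi.single_apply, smul_eq_mul]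
    rcases eq_or_ne i' i with rfl | hne
    · simp
    · simp [hne]
  · simp

lemma emb_single_add (i j : Fin l) (s t : ℤ) :
    emb l (Pi.single i s + Pi.single j t) = (s : ℝ) • εv l i + (t : ℝ) • εv l j := by
  rw [emb_add, emb_single, emb_single]

/-- characterization of `BCm` -/
lemma BCm_eq : BCm l = {x | ∃ f : Fin l → ℤ, (∑ i, f i * f i) = 2 ∧ x = emb l f} := by
  ext x
  constructor
  · intro hx
    rw [BCm] at hx
    simp only [Set.mem_iUnion] at hx
    obtain ⟨i, j, hij, hxS⟩ := hx
    simp only [Set.mem_insert_iff, Set.mem_singleton_iff] at hxS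
    rcases hxS with rfl | rfl | rfl
    · exact ⟨Pi.single i 1 + Pi.single j 1, by rw [sum_pair_sq hij]; norm_num,
        by rw [emb_single_add]; push_cast; module⟩
    · exact ⟨Pi.single i 1 + Pi.single j (-1), by rw [sum_pair_sq hij]; norm_num,
        by rw [emb_single_add]; push_cast; module⟩
    · exact ⟨Pi.single i (-1) + Pi.single j (-1), by rw [sum_pair_sq hij]; norm_num,
        by rw [emb_single_add]; push_cast; module⟩
  · rintro ⟨f, hf, rfl⟩
    obtain ⟨i, j, hij, hsi, hsj, hf2⟩ := norm_two_char f hf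
    rw [BCm]
    simp only [Set.mem_iUnion, Set.mem_insert_iff, Set.mem_singleton_iff]
    rcases hsi with h1 | h1 <;> rcases hsj with h2 | h2
    · exact ⟨i, j, hij, Or.inl (by rw [hf2, h1, h2, emb_single_add]; push_cast; module)⟩
    · exact ⟨i, j, hij, Or.inr (Or.inl (by rw [hf2, h1, h2, emb_single_add]; push_cast; module))⟩
    · refine ⟨j, i, fun hc => hij hc.symm, Or.inr (Or.inl ?_)⟩
      rw [hf2, h1, h2, emb_single_add]; push_cast; module
    · exact ⟨i, j, hij, Or.inr (Or.inr (by rw [hf2, h1, h2, emb_single_add]; push_cast; module))⟩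

/-- characterization of `BCl` -/
lemma BCl_eq : BCl l = {x | ∃ f : Fin l → ℤ,
    (∑ i, f i * f i) = 4 ∧ (∀ i, (2:ℤ) ∣ f i) ∧ x = emb l f} := by
  ext x
  constructor
  · intro hx
    rw [BCl] at hx
    simp only [Set.mem_iUnion, Set.mem_insert_iff, Set.mem_singleton_iff] at hx
    obtain ⟨i, hxS⟩ := hx
    have hdvd : ∀ (s : ℤ) (j : Fin l), (2:ℤ) ∣ (Pi.single i (2 * s) : Fin l → ℤ) j := by
      intro s j
      rcases eq_or_ne j i with rfl | hne
      · simp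
      · simp [Pi.single_apply, hne]
    rcases hxS with rfl | rfl
    · exact ⟨Pi.single i 2, by rw [sum_single_sq]; norm_num,
        fun j => by simpa using hdvd 1 j,
        by rw [emb_single]; push_cast; module⟩
    · exact ⟨Pi.single i (-2), by rw [sum_single_sq]; norm_num,
        fun j => by simpa using hdvd (-1) j,
        by rw [emb_single]; push_cast; module⟩
  · rintro ⟨f, hf, hdvd, rfl⟩
    set g : Fin l → ℤ := fun i => f i / 2 with hg
    have hfg : ∀ i, f i = 2 * g i := fun i => by
      have h := hdvd i
      show f i = 2 * (f i / 2)
      omega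
    have hsumg : ∑ i, g i * g i = 1 := by
      have : ∑ i, f i * f i = 4 * ∑ i, g i * g i := by
        rw [Finset.mul_sum]
        exact Finset.sum_congr rfl (fun i _ => by rw [hfg i]; ring)
      omega
    obtain ⟨i, hs, hg2⟩ := norm_one_char g hsumg
    have hf2 : f = Pi.single i (2 * g i) := by
      funext j
      rw [hfg j]
      rcases eq_or_ne j i with rfl | hne
      · simp
      · rw [Pi.single_eq_of_ne hne]
        have := congrFun hg2 j
        rw [Pi.single_eq_of_ne hne] at this
        omega
    rw [BCl]
    simp only [Set.mem_iUnion, Set.mem_insert_iff, Set.mem_singleton_iff]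
    rcases hs with h1 | h1
    · exact ⟨i, Or.inl (by rw [hf2, h1, emb_single]; push_cast; module)⟩
    · exact ⟨i, Or.inr (by rw [hf2, h1, emb_single]; push_cast; module)⟩

end StarAux
namespace StarAux
variable {l : ℕ}

def NS (l : ℕ) : Set (Fin l → ℤ) := {f | ∑ i, f i * f i = 1}
def NM (l : ℕ) : Set (Fin l → ℤ) := {f | ∑ i, f i * f i = 2}
def NL (l : ℕ) : Set (Fin l → ℤ) := {f | ∑ i, f i * f i = 4 ∧ ∀ i, (2:ℤ) ∣ f i}

def mixS (l : ℕ) (N : Set (Fin l → ℤ)) (L : Set (ℤ × ℤ)) : Set (V l) :=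
  {x | ∃ f ∈ N, ∃ p ∈ L, x = emb l f + rad l p}

def LatD (ka kb : ℤ) : Set (ℤ × ℤ) := {p | ka ∣ p.1 ∧ kb ∣ p.2}
def L11 : Set (ℤ × ℤ) := {p | (2:ℤ) ∣ (p.1 - 1) * (p.2 - 1)}

def Rgen (l : ℕ) (Ls Lm Ll : Set (ℤ × ℤ)) : Set (V l) :=
  mixS l (NS l) Ls ∪ mixS l (NM l) Lm ∪ mixS l (NL l) Ll

lemma BCs_eq' : BCs l = {x | ∃ f ∈ NS l, x = emb l f} := by
  rw [BCs_eq]; rfl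

lemma BCm_eq' : BCm l = {x | ∃ f ∈ NM l, x = emb l f} := by
  rw [BCm_eq]; rfl

lemma BCl_eq' : BCl l = {x | ∃ f ∈ NL l, x = emb l f} := by
  rw [BCl_eq]
  ext x
  constructor
  · rintro ⟨f, h1, h2, rfl⟩; exact ⟨f, ⟨h1, h2⟩, rfl⟩
  · rintro ⟨f, ⟨h1, h2⟩, rfl⟩; exact ⟨f, h1, h2, rfl⟩

lemma add_Zb_Za (N : Set (Fin l → ℤ)) (BC : Set (V l))
    (hBC : BC = {x | ∃ f ∈ N, x = emb l f}) (ka kb : ℤ) :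
    (BC + Zb l kb) + Za l ka = mixS l N (LatD ka kb) := by
  ext x
  constructor
  · intro hx
    obtain ⟨y, hy, z, hz, rfl⟩ := Set.mem_add.mp hx
    obtain ⟨γ, hγ, w, hw, rfl⟩ := Set.mem_add.mp hy
    obtain ⟨f, hf, rfl⟩ := hBC ▸ hγ
    obtain ⟨n, rfl⟩ := hw
    obtain ⟨m, rfl⟩ := hz
    exact ⟨f, hf, (ka * m, kb * n), ⟨dvd_mul_right _ _, dvd_mul_right _ _⟩,
      by rw [rad]; push_cast; module⟩
  · rintro ⟨f, hf, p, ⟨⟨m, hm⟩, ⟨n, hn⟩⟩, rfl⟩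
    refine Set.mem_add.mpr ⟨emb l f + ((kb * n : ℤ) : ℝ) • bv l,
      Set.mem_add.mpr ⟨emb l f, hBC ▸ ⟨f, hf, rfl⟩, ((kb * n : ℤ) : ℝ) • bv l, ⟨n, rfl⟩, rfl⟩,
      ((ka * m : ℤ) : ℝ) • av l, ⟨m, rfl⟩, ?_⟩
    rw [rad, hm, hn]; push_cast; module

lemma add_L11 (N : Set (Fin l → ℤ)) (BC : Set (V l))
    (hBC : BC = {x | ∃ f ∈ N, x = emb l f}) :
    BC + Lset l 1 1 1 1 = mixS l N L11 := by
  ext x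
  constructor
  · intro hx
    obtain ⟨γ, hγ, w, hw, rfl⟩ := Set.mem_add.mp hx
    obtain ⟨f, hf, rfl⟩ := hBC ▸ hγ
    obtain ⟨m, n, hmn, rfl⟩ := hw
    exact ⟨f, hf, (m, n), hmn, by rw [rad]; push_cast; module⟩
  · rintro ⟨f, hf, p, hp, rfl⟩
    refine Set.mem_add.mpr ⟨emb l f, hBC ▸ ⟨f, hf, rfl⟩,
      ((1 * p.1 : ℤ) : ℝ) • av l + ((1 * p.2 : ℤ) : ℝ) • bv l, ⟨p.1, p.2, hp, rfl⟩, ?_⟩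
    rw [rad]; push_cast; module

lemma RBC11star_eq : RBC11star l = Rgen l (LatD 1 1) (LatD 1 1) L11 := by
  rw [RBC11star, Rgen, AffS, AffM, tfm,
    add_Zb_Za (NS l) (BCs l) BCs_eq' 1 1, add_Zb_Za (NM l) (BCm l) BCm_eq' 1 1,
    add_L11 (NL l) (BCl l) BCl_eq']

lemma RBC44star_eq : RBC44star l = Rgen l L11 (LatD 2 2) (LatD 4 4) := by
  rw [RBC44star, Rgen, AffM, AffL, tfm, tfl,
    add_Zb_Za (NM l) (BCm l) BCm_eq' 2 2, add_Zb_Za (NL l) (BCl l) BCl_eq' 4 4,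
    add_L11 (NS l) (BCs l) BCs_eq']

end StarAux
namespace StarAux
variable {l : ℕ}

lemma Iform_sub_smul_left (x y z : V l) (c : ℝ) :
    Iform l (x - c • y) z = Iform l x z - c * Iform l y z := by
  simp [Iform, sub_mul, Finset.sum_sub_distrib, Finset.mul_sum, mul_assoc]

lemma reflV_involutive (α x : V l) (hα : Iform l α α ≠ 0) :
    reflV l α (reflV l α x) = x := by
  unfold reflV
  rw [Iform_sub_smul_left]
  have h : 2 * (Iform l x α - 2 * Iform l x α / Iform l α α * Iform l α α) / Iform l α α
      = -(2 * Iform l x α / Iform l α α) := by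
    field_simp; ring
  rw [h]
  module

lemma sum_mul_comm (f g : Fin l → ℤ) : ∑ i, g i * f i = ∑ i, f i * g i :=
  Finset.sum_congr rfl (fun i _ => mul_comm _ _)

lemma reflV_formula (f g : Fin l → ℤ) (p q : ℤ × ℤ) (k Nf : ℤ)
    (hNf : ∑ i, f i * f i = Nf) (hNf0 : Nf ≠ 0)
    (hk : k * Nf = 2 * ∑ i, f i * g i) :
    reflV l (emb l f + rad l p) (emb l g + rad l q)
      = emb l (g - k • f) + rad l (q.1 - k * p.1, q.2 - k * p.2) := by
  unfold reflV
  have h1 : Iform l (emb l g + rad l q) (emb l f + rad l p) = ((∑ i, f i * g i : ℤ) : ℝ) := by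
    rw [Iform_emb_rad, sum_mul_comm]
  have h2 : Iform l (emb l f + rad l p) (emb l f + rad l p) = ((Nf : ℤ) : ℝ) := by
    rw [Iform_emb_rad, hNf]
  rw [h1, h2]
  have hNfR : ((Nf : ℤ) : ℝ) ≠ 0 := Int.cast_ne_zero.mpr hNf0
  have hcoef : 2 * ((∑ i, f i * g i : ℤ) : ℝ) / ((Nf : ℤ) : ℝ) = (k : ℝ) := by
    rw [div_eq_iff hNfR]
    exact_mod_cast (by push_cast; linear_combination (hk.symm : (2 * ∑ i, f i * g i : ℤ) = k * Nf))
  rw [hcoef, emb_sub_zsmul, rad_sub_zsmul]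
  module

lemma sum_refl_sq (f g : Fin l → ℤ) (k Nf : ℤ)
    (hNf : ∑ i, f i * f i = Nf)
    (hk : k * Nf = 2 * ∑ i, f i * g i) :
    ∑ i, (g - k • f) i * (g - k • f) i = ∑ i, g i * g i := by
  have key : ∀ i, (g - k • f) i * (g - k • f) i
      = g i * g i - 2 * k * (f i * g i) + k * k * (f i * f i) := by
    intro i; simp only [Pi.sub_apply, Pi.smul_apply, smul_eq_mul]; ring
  rw [Finset.sum_congr rfl (fun i _ => key i)]
  rw [Finset.sum_add_distrib, Finset.sum_sub_distrib, ← Finset.mul_sum, ← Finset.mul_sum]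
  rw [hNf]
  linear_combination k * hk

end StarAux
namespace StarAux
variable {l : ℕ} {Ls Lm Ll : Set (ℤ × ℤ)}

lemma mem_Rgen_s {f : Fin l → ℤ} {p : ℤ × ℤ} (hf : f ∈ NS l) (hp : p ∈ Ls) :
    emb l f + rad l p ∈ Rgen l Ls Lm Ll := Or.inl (Or.inl ⟨f, hf, p, hp, rfl⟩)

lemma mem_Rgen_m {f : Fin l → ℤ} {p : ℤ × ℤ} (hf : f ∈ NM l) (hp : p ∈ Lm) :
    emb l f + rad l p ∈ Rgen l Ls Lm Ll := Or.inl (Or.inr ⟨f, hf, p, hp, rfl⟩)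

lemma mem_Rgen_l {f : Fin l → ℤ} {p : ℤ × ℤ} (hf : f ∈ NL l) (hp : p ∈ Ll) :
    emb l f + rad l p ∈ Rgen l Ls Lm Ll := Or.inr ⟨f, hf, p, hp, rfl⟩

lemma even_sum_left {f g : Fin l → ℤ} (hf : ∀ i, (2:ℤ) ∣ f i) :
    (2:ℤ) ∣ ∑ i, f i * g i :=
  Finset.dvd_sum (fun i _ => (hf i).mul_right (g i))

lemma even_sum_right {f g : Fin l → ℤ} (hg : ∀ i, (2:ℤ) ∣ g i) :
    (2:ℤ) ∣ ∑ i, f i * g i :=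
  Finset.dvd_sum (fun i _ => (hg i).mul_left (f i))

lemma four_sum {f g : Fin l → ℤ} (hf : ∀ i, (2:ℤ) ∣ f i) (hg : ∀ i, (2:ℤ) ∣ g i) :
    (4:ℤ) ∣ ∑ i, f i * g i :=
  Finset.dvd_sum (fun i _ => (by norm_num : (4:ℤ) = 2 * 2) ▸ mul_dvd_mul (hf i) (hg i))

/-- closure of `Rgen` under reflections -/
lemma reflect_closed
    (HS : ∀ p ∈ Ls, ∀ q (k : ℤ), ((q ∈ Ls ∧ 2 ∣ k) ∨ q ∈ Lm ∨ q ∈ Ll) →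
      ((p.1 - k * q.1, p.2 - k * q.2) : ℤ × ℤ) ∈ Ls)
    (HM : ∀ p ∈ Lm, ∀ q (k : ℤ), ((q ∈ Ls ∧ 2 ∣ k) ∨ q ∈ Lm ∨ q ∈ Ll) →
      ((p.1 - k * q.1, p.2 - k * q.2) : ℤ × ℤ) ∈ Lm)
    (HL : ∀ p ∈ Ll, ∀ q (k : ℤ), ((q ∈ Ls ∧ 4 ∣ k) ∨ (q ∈ Lm ∧ 2 ∣ k) ∨ (q ∈ Ll ∧ 2 ∣ k)) →
      ((p.1 - k * q.1, p.2 - k * q.2) : ℤ × ℤ) ∈ Ll)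
    {α β : V l} (hα : α ∈ Rgen l Ls Lm Ll) (hβ : β ∈ Rgen l Ls Lm Ll) :
    reflV l α β ∈ Rgen l Ls Lm Ll := by
  -- decompose β (target class) then α (reflecting root)
  rcases hβ with (⟨g, hg, q, hq, rfl⟩ | ⟨g, hg, q, hq, rfl⟩) | ⟨g, hg, q, hq, rfl⟩ <;>
    rcases hα with (⟨f, hf, p, hp, rfl⟩ | ⟨f, hf, p, hp, rfl⟩) | ⟨f, hf, p, hp, rfl⟩
  -- β short
  · -- α short : k = 2S
    rw [reflV_formula f g p q (2 * ∑ i, f i * g i) 1 hf one_ne_zero (by ring)]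
    exact mem_Rgen_s (by rw [NS, Set.mem_setOf_eq,
        sum_refl_sq f g _ 1 hf (by ring)]; exact hg)
      (HS q hq p _ (Or.inl ⟨hp, dvd_mul_right 2 _⟩))
  · -- α middle : k = S
    rw [reflV_formula f g p q (∑ i, f i * g i) 2 hf two_ne_zero (by ring)]
    exact mem_Rgen_s (by rw [NS, Set.mem_setOf_eq,
        sum_refl_sq f g _ 2 hf (by ring)]; exact hg)
      (HS q hq p _ (Or.inr (Or.inl hp)))
  · -- α long : k = S/2
    obtain ⟨d, hd⟩ := even_sum_left hf.2 (g := g)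
    rw [reflV_formula f g p q d 4 hf.1 four_ne_zero (by omega)]
    exact mem_Rgen_s (by rw [NS, Set.mem_setOf_eq,
        sum_refl_sq f g d 4 hf.1 (by omega)]; exact hg)
      (HS q hq p _ (Or.inr (Or.inr hp)))
  -- β middle
  · rw [reflV_formula f g p q (2 * ∑ i, f i * g i) 1 hf one_ne_zero (by ring)]
    exact mem_Rgen_m (by rw [NM, Set.mem_setOf_eq,
        sum_refl_sq f g _ 1 hf (by ring)]; exact hg)
      (HM q hq p _ (Or.inl ⟨hp, dvd_mul_right 2 _⟩))
  · rw [reflV_formula f g p q (∑ i, f i * g i) 2 hf two_ne_zero (by ring)]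
    exact mem_Rgen_m (by rw [NM, Set.mem_setOf_eq,
        sum_refl_sq f g _ 2 hf (by ring)]; exact hg)
      (HM q hq p _ (Or.inr (Or.inl hp)))
  · obtain ⟨d, hd⟩ := even_sum_left hf.2 (g := g)
    rw [reflV_formula f g p q d 4 hf.1 four_ne_zero (by omega)]
    exact mem_Rgen_m (by rw [NM, Set.mem_setOf_eq,
        sum_refl_sq f g d 4 hf.1 (by omega)]; exact hg)
      (HM q hq p _ (Or.inr (Or.inr hp)))
  -- β long
  · -- α short : k = 2S, with S even since g is even
    obtain ⟨e, he⟩ := even_sum_right (f := f) hg.2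
    rw [reflV_formula f g p q (2 * ∑ i, f i * g i) 1 hf one_ne_zero (by ring)]
    refine mem_Rgen_l ⟨by rw [sum_refl_sq f g _ 1 hf (by ring)]; exact hg.1, ?_⟩
      (HL q hq p _ (Or.inl ⟨hp, by omega⟩))
    intro i
    have h1 := hg.2 i
    have h2 : (2:ℤ) ∣ (2 * ∑ j, f j * g j) * f i := (dvd_mul_right 2 _).mul_right _
    simpa using dvd_sub h1 h2
  · -- α middle : k = S even
    obtain ⟨e, he⟩ := even_sum_right (f := f) hg.2
    rw [reflV_formula f g p q (∑ i, f i * g i) 2 hf two_ne_zero (by ring)]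
    refine mem_Rgen_l ⟨by rw [sum_refl_sq f g _ 2 hf (by ring)]; exact hg.1, ?_⟩
      (HL q hq p _ (Or.inr (Or.inl ⟨hp, ⟨e, he⟩⟩)))
    intro i
    have h1 := hg.2 i
    have h2 : (2:ℤ) ∣ (∑ j, f j * g j) * f i := ⟨e * f i, by rw [he]; ring⟩
    simpa using dvd_sub h1 h2
  · -- α long : k = S/2 even since 4 ∣ S
    obtain ⟨d, hd⟩ := even_sum_left hf.2 (g := g)
    obtain ⟨e, he⟩ := four_sum hf.2 hg.2
    rw [reflV_formula f g p q d 4 hf.1 four_ne_zero (by omega)]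
    refine mem_Rgen_l ⟨by rw [sum_refl_sq f g d 4 hf.1 (by omega)]; exact hg.1, ?_⟩
      (HL q hq p _ (Or.inr (Or.inr ⟨hp, by omega⟩)))
    intro i
    have h1 := hg.2 i
    have h2 : (2:ℤ) ∣ d * f i := (hf.2 i).mul_left d
    simpa using dvd_sub h1 h2

end StarAux
namespace StarAux
variable {l : ℕ} {Ls Lm Ll : Set (ℤ × ℤ)}

lemma sum_single_mul (i : Fin l) (s : ℤ) (g : Fin l → ℤ) :
    ∑ j, (Pi.single i s : Fin l → ℤ) j * g j = s * g i := by
  rw [Finset.sum_eq_single i]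
  · simp
  · intro j _ hj; rw [Pi.single_eq_of_ne hj]; ring
  · intro h; exact absurd (Finset.mem_univ i) h

/-- every element of `Rgen` has integer coordinates -/
lemma Rgen_int_coords {x : V l} (hx : x ∈ Rgen l Ls Lm Ll) (j : Fin (l + 2)) :
    ∃ k : ℤ, x j = (k : ℝ) := by
  have key : ∀ (f : Fin l → ℤ) (p : ℤ × ℤ), ∃ k : ℤ, (emb l f + rad l p) j = (k : ℝ) := by
    intro f p
    refine Fin.addCases (fun i => ?_) (fun j' => ?_) j
    · exact ⟨f i, by simp⟩
    · rcases Fin.exists_fin_two.mp ⟨j', rfl⟩ with h | h <;> subst h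
      · exact ⟨p.1, by simp⟩
      · exact ⟨p.2, by simp⟩
  rcases hx with (⟨f, _, p, _, rfl⟩ | ⟨f, _, p, _, rfl⟩) | ⟨f, _, p, _, rfl⟩ <;> exact key f p

lemma Rgen_discrete {x : V l} (hx : x ∈ Rgen l Ls Lm Ll) :
    ∃ ε > 0, ∀ y ∈ Rgen l Ls Lm Ll, ‖x - y‖ < ε → y = x := by
  refine ⟨1, one_pos, fun y hy hnorm => ?_⟩
  funext j
  obtain ⟨k1, hk1⟩ := Rgen_int_coords hx j
  obtain ⟨k2, hk2⟩ := Rgen_int_coords hy j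
  have h1 : ‖(x - y) j‖ ≤ ‖x - y‖ := norm_le_pi_norm (x - y) j
  have h2 : |(k1 : ℝ) - (k2 : ℝ)| < 1 := by
    rw [← hk1, ← hk2]
    calc |x j - y j| = ‖(x - y) j‖ := by rw [Pi.sub_apply]; rfl
    _ ≤ ‖x - y‖ := h1
    _ < 1 := hnorm
  have h3 : |k1 - k2| < 1 := by exact_mod_cast (by push_cast; exact h2 : |((k1 - k2 : ℤ) : ℝ)| < 1)
  have : k1 = k2 := by have := abs_lt.mp h3; omega
  rw [hk1, hk2, this]

lemma Iform_Rgen {x y : V l} (f g : Fin l → ℤ) (p q : ℤ × ℤ)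
    (hx : x = emb l f + rad l p) (hy : y = emb l g + rad l q) :
    Iform l x y = ((∑ i, f i * g i : ℤ) : ℝ) := by
  rw [hx, hy, Iform_emb_rad]

lemma Rgen_norm {x : V l} (hx : x ∈ Rgen l Ls Lm Ll) :
    ∃ (f : Fin l → ℤ) (p : ℤ × ℤ), x = emb l f + rad l p ∧
      (∑ i, f i * f i = 1 ∨ ∑ i, f i * f i = 2 ∨ ∑ i, f i * f i = 4) := by
  rcases hx with (⟨f, hf, p, _, rfl⟩ | ⟨f, hf, p, _, rfl⟩) | ⟨f, hf, p, _, rfl⟩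
  · exact ⟨f, p, rfl, Or.inl hf⟩
  · exact ⟨f, p, rfl, Or.inr (Or.inl hf)⟩
  · exact ⟨f, p, rfl, Or.inr (Or.inr hf.1)⟩

lemma Rgen_nonisotropic {x : V l} (hx : x ∈ Rgen l Ls Lm Ll) : Iform l x x ≠ 0 := by
  obtain ⟨f, p, rfl, hn⟩ := Rgen_norm hx
  rw [Iform_emb_rad]
  rcases hn with h | h | h <;> rw [h] <;> norm_num

lemma Rgen_integral {x y : V l} (hx : x ∈ Rgen l Ls Lm Ll) (hy : y ∈ Rgen l Ls Lm Ll) :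
    ∃ n : ℤ, 2 * Iform l x y = (n : ℝ) * Iform l x x := by
  obtain ⟨g, q, hyd, _⟩ := Rgen_norm hy
  have key : ∀ (f : Fin l → ℤ) (p : ℤ × ℤ) (Nf : ℤ), x = emb l f + rad l p →
      (∑ i, f i * f i) = Nf → ∀ k : ℤ, k * Nf = 2 * ∑ i, f i * g i →
      2 * Iform l x y = (k : ℝ) * Iform l x x := by
    intro f p Nf hxd hNf k hk
    rw [Iform_Rgen f g p q hxd hyd, Iform_Rgen f f p p hxd hxd, hNf]
    exact_mod_cast hk.symm
  rcases hx with (⟨f, hf, p, _, rfl⟩ | ⟨f, hf, p, _, rfl⟩) | ⟨f, hf, p, _, rfl⟩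
  · exact ⟨2 * ∑ i, f i * g i, key f p 1 rfl hf _ (by ring)⟩
  · exact ⟨∑ i, f i * g i, key f p 2 rfl hf _ (by ring)⟩
  · obtain ⟨d, hd⟩ := even_sum_left hf.2 (g := g)
    exact ⟨d, key f p 4 rfl hf.1 d (by omega)⟩

lemma Rgen_exists_nonzero {x : V l} (hx : x ∈ Rgen l Ls Lm Ll) :
    ∃ (f : Fin l → ℤ) (p : ℤ × ℤ) (i : Fin l), x = emb l f + rad l p ∧ f i ≠ 0 := by
  obtain ⟨f, p, rfl, hn⟩ := Rgen_norm hx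
  have : ∃ i, f i ≠ 0 := by
    by_contra hc
    push_neg at hc
    have : ∑ i, f i * f i = 0 := Finset.sum_eq_zero (fun i _ => by rw [hc i]; ring)
    omega
  obtain ⟨i, hi⟩ := this
  exact ⟨f, p, i, rfl, hi⟩

lemma Rgen_irred (hl : 1 ≤ l) (hLm : Lm.Nonempty) (hLl : Ll.Nonempty)
    (R1 R2 : Set (V l)) (hu : R1 ∪ R2 = Rgen l Ls Lm Ll)
    (ho : ∀ x ∈ R1, ∀ y ∈ R2, Iform l x y = 0) : R1 = ∅ ∨ R2 = ∅ := by
  by_contra hc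
  push_neg at hc
  obtain ⟨hne1, hne2⟩ := hc
  obtain ⟨α, hα1⟩ := hne1
  obtain ⟨β, hβ2⟩ := hne2
  obtain ⟨pm, hpm⟩ := hLm
  obtain ⟨pl, hpl⟩ := hLl
  have hαR : α ∈ Rgen l Ls Lm Ll := hu ▸ Set.mem_union_left _ hα1
  have hβR : β ∈ Rgen l Ls Lm Ll := hu ▸ Set.mem_union_right _ hβ2
  -- the long roots μ i and middle roots ν i j
  set μ : Fin l → V l := fun i => emb l (Pi.single i 2) + rad l pl with hμ
  have hsingle_even : ∀ (i : Fin l) (s : ℤ) (j : Fin l),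
      (2:ℤ) ∣ (Pi.single i (2 * s) : Fin l → ℤ) j := by
    intro i s j
    rcases eq_or_ne j i with rfl | hne
    · simp
    · simp [Pi.single_apply, hne]
  have hμR : ∀ i, μ i ∈ Rgen l Ls Lm Ll := fun i =>
    mem_Rgen_l ⟨by rw [sum_single_sq]; norm_num,
      fun j => by simpa using hsingle_even i 1 j⟩ hpl
  have hν : ∀ i j : Fin l, i ≠ j →
      emb l (Pi.single i 1 + Pi.single j 1) + rad l pm ∈ Rgen l Ls Lm Ll := fun i j hij =>
    mem_Rgen_m (by rw [NM, Set.mem_setOf_eq, sum_pair_sq hij]; norm_num) hpm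
  -- if x ∈ R1 and Iform x y ≠ 0 for y ∈ R then y ∈ R1
  have step : ∀ x ∈ R1, ∀ y ∈ Rgen l Ls Lm Ll, Iform l x y ≠ 0 → y ∈ R1 := by
    intro x hx y hyR hI
    rcases (hu ▸ hyR : y ∈ R1 ∪ R2) with h | h
    · exact h
    · exact absurd (ho x hx y h) hI
  -- Iform of μ i with a root
  have hIμ : ∀ (i : Fin l) (g : Fin l → ℤ) (q : ℤ × ℤ),
      Iform l (μ i) (emb l g + rad l q) = ((2 * g i : ℤ) : ℝ) := by
    intro i g q
    rw [hμ, Iform_emb_rad, sum_single_mul]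
  obtain ⟨f, p, i0, hαd, hfi0⟩ := Rgen_exists_nonzero hαR
  have hμi0 : μ i0 ∈ R1 := by
    refine step α hα1 (μ i0) (hμR i0) ?_
    have : Iform l α (μ i0) = ((2 * f i0 : ℤ) : ℝ) := by
      rw [hαd, hμ, Iform_emb_rad]
      congr 1
      rw [sum_mul_comm, sum_single_mul]
    rw [this]
    exact_mod_cast (by omega : (2 * f i0 : ℤ) ≠ 0)
  have hμall : ∀ j, μ j ∈ R1 := by
    intro j
    rcases eq_or_ne i0 j with rfl | hne
    · exact hμi0
    · have hνR := hν i0 j hne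
      have hν1 : emb l (Pi.single i0 1 + Pi.single j 1) + rad l pm ∈ R1 := by
        refine step (μ i0) hμi0 _ hνR ?_
        rw [hIμ]
        have : (Pi.single i0 1 + Pi.single j 1 : Fin l → ℤ) i0 = 1 := by
          rw [Pi.add_apply, Pi.single_eq_same, Pi.single_eq_of_ne hne]; ring
        rw [this]
        norm_num
      refine step _ hν1 (μ j) (hμR j) ?_
      have : Iform l (emb l (Pi.single i0 1 + Pi.single j 1) + rad l pm) (μ j)
          = ((2 : ℤ) : ℝ) := by
        rw [hμ, Iform_emb_rad]
        congr 1
        rw [sum_mul_comm, sum_single_mul, Pi.add_apply, Pi.single_eq_same,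
          Pi.single_eq_of_ne (Ne.symm hne)]
        ring
      rw [this]
      norm_num
  obtain ⟨g, q, j1, hβd, hgj1⟩ := Rgen_exists_nonzero hβR
  have : Iform l (μ j1) β = ((2 * g j1 : ℤ) : ℝ) := by rw [hβd, hIμ]
  have hzero := ho (μ j1) (hμall j1) β hβ2
  rw [this] at hzero
  have hz2 : (2 * g j1 : ℤ) = 0 := by exact_mod_cast hzero
  exact hgj1 (by omega)

end StarAux
namespace StarAux
variable {l : ℕ} {Ls Lm Ll : Set (ℤ × ℤ)}

lemma single_mem_NS (i : Fin l) : (Pi.single i 1 : Fin l → ℤ) ∈ NS l := by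
  show ∑ j, _ = 1
  rw [sum_single_sq]; norm_num

lemma rad_split (p : ℤ × ℤ) : rad l (p.1 + p.1, p.2 + p.2) = rad l p + rad l p := by
  simp only [rad]
  push_cast
  module

lemma Rgen_spans (hl : 1 ≤ l) (h10 : ((1,0) : ℤ×ℤ) ∈ Ls) (h01 : ((0,1) : ℤ×ℤ) ∈ Ls)
    (h11 : ((1,1) : ℤ×ℤ) ∈ Ls) :
    Submodule.span ℝ (Rgen l Ls Lm Ll) = ⊤ := by
  have hx : ∀ (i : Fin l) (p : ℤ × ℤ), p ∈ Ls →
      emb l (Pi.single i 1) + rad l p ∈ Submodule.span ℝ (Rgen l Ls Lm Ll) :=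
    fun i p hp => Submodule.subset_span (mem_Rgen_s (single_mem_NS i) hp)
  set i0 : Fin l := ⟨0, hl⟩ with hi0
  have hav : av l ∈ Submodule.span ℝ (Rgen l Ls Lm Ll) := by
    have heq : av l = (emb l (Pi.single i0 1) + rad l (1,1))
        - (emb l (Pi.single i0 1) + rad l (0,1)) := by
      simp only [rad]; push_cast; module
    rw [heq]
    exact sub_mem (hx i0 _ h11) (hx i0 _ h01)
  have hbv : bv l ∈ Submodule.span ℝ (Rgen l Ls Lm Ll) := by
    have heq : bv l = (emb l (Pi.single i0 1) + rad l (1,1))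
        - (emb l (Pi.single i0 1) + rad l (1,0)) := by
      simp only [rad]; push_cast; module
    rw [heq]
    exact sub_mem (hx i0 _ h11) (hx i0 _ h10)
  have hεv : ∀ i : Fin l, εv l i ∈ Submodule.span ℝ (Rgen l Ls Lm Ll) := by
    intro i
    have heq : εv l i = (emb l (Pi.single i 1) + rad l (1,0)) - av l := by
      rw [εv_eq_emb]
      simp only [rad, av]; push_cast; module
    rw [heq]
    exact sub_mem (hx i _ h10) hav
  have hsingle : ∀ j : Fin (l + 2),
      (Pi.single j 1 : V l) ∈ Submodule.span ℝ (Rgen l Ls Lm Ll) := by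
    intro j
    rcases lt_or_ge (j : ℕ) l with h | h
    · have : j = Fin.castAdd 2 ⟨(j : ℕ), h⟩ := Fin.ext (by simp)
      rw [this]
      exact hεv _
    · rcases (by omega : (j : ℕ) = l ∨ (j : ℕ) = l + 1) with h' | h'
      · have : j = Fin.natAdd l 0 := Fin.ext (by simp [h'])
        rw [this]
        exact hav
      · have : j = Fin.natAdd l 1 := Fin.ext (by simp [h'])
        rw [this]
        exact hbv
  rw [eq_top_iff]
  rintro x -
  have hrepr : x = ∑ j : Fin (l + 2), x j • (Pi.single j 1 : V l) := by
    funext m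
    rw [Finset.sum_apply]
    rw [Finset.sum_eq_single m]
    · simp
    · intro j _ hj
      simp [Pi.single_apply, Ne.symm hj]
    · intro h; exact absurd (Finset.mem_univ m) h
  rw [hrepr]
  exact Submodule.sum_mem _ (fun j _ => Submodule.smul_mem _ _ (hsingle j))

lemma sum_add_self_sq (f : Fin l → ℤ) :
    ∑ i, (f + f) i * (f + f) i = 4 * ∑ i, f i * f i := by
  rw [Finset.mul_sum]
  exact Finset.sum_congr rfl (fun i _ => by simp only [Pi.add_apply]; ring)

lemma Rgen_reduced (Hred : ∀ p ∈ Ls, ((p.1 + p.1, p.2 + p.2) : ℤ×ℤ) ∉ Ll) :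
    IsReducedRS l (Rgen l Ls Lm Ll) := by
  intro α hα h2
  obtain ⟨f, p, hαd, hfn⟩ :
      ∃ (f : Fin l → ℤ) (p : ℤ × ℤ), α = emb l f + rad l p ∧
        ((f ∈ NS l ∧ p ∈ Ls) ∨ (f ∈ NM l ∧ p ∈ Lm) ∨ (f ∈ NL l ∧ p ∈ Ll)) := by
    rcases hα with (⟨f, hf, p, hp, rfl⟩ | ⟨f, hf, p, hp, rfl⟩) | ⟨f, hf, p, hp, rfl⟩
    · exact ⟨f, p, rfl, Or.inl ⟨hf, hp⟩⟩
    · exact ⟨f, p, rfl, Or.inr (Or.inl ⟨hf, hp⟩)⟩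
    · exact ⟨f, p, rfl, Or.inr (Or.inr ⟨hf, hp⟩)⟩
  have hsmul : (2:ℝ) • α = emb l (f + f) + rad l (p.1 + p.1, p.2 + p.2) := by
    rw [hαd, emb_add, rad_split]
    module
  rw [hsmul] at h2
  have hval : ∑ i, (f + f) i * (f + f) i = 4 * ∑ i, f i * f i := sum_add_self_sq f
  rcases h2 with (⟨g, hg, q, hq, he⟩ | ⟨g, hg, q, hq, he⟩) | ⟨g, hg, q, hq, he⟩ <;>
    obtain ⟨hgf, hqp⟩ := emb_rad_eq_iff.mp he.symm <;> subst hgf <;> subst hqp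
  · -- 2α short : impossible
    rw [NS, Set.mem_setOf_eq, hval] at hg
    rcases hfn with ⟨hf, _⟩ | ⟨hf, _⟩ | ⟨hf, _⟩
    · rw [NS, Set.mem_setOf_eq] at hf; omega
    · rw [NM, Set.mem_setOf_eq] at hf; omega
    · have := hf.1; omega
  · rw [NM, Set.mem_setOf_eq, hval] at hg
    rcases hfn with ⟨hf, _⟩ | ⟨hf, _⟩ | ⟨hf, _⟩
    · rw [NS, Set.mem_setOf_eq] at hf; omega
    · rw [NM, Set.mem_setOf_eq] at hf; omega
    · have := hf.1; omega
  · have hg4 := hg.1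
    rw [hval] at hg4
    rcases hfn with ⟨hf, hp⟩ | ⟨hf, _⟩ | ⟨hf, _⟩
    · exact Hred p hp hq
    · rw [NM, Set.mem_setOf_eq] at hf; omega
    · have := hf.1; omega

lemma Rgen_reflects
    (HS : ∀ p ∈ Ls, ∀ q (k : ℤ), ((q ∈ Ls ∧ 2 ∣ k) ∨ q ∈ Lm ∨ q ∈ Ll) →
      ((p.1 - k * q.1, p.2 - k * q.2) : ℤ × ℤ) ∈ Ls)
    (HM : ∀ p ∈ Lm, ∀ q (k : ℤ), ((q ∈ Ls ∧ 2 ∣ k) ∨ q ∈ Lm ∨ q ∈ Ll) →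
      ((p.1 - k * q.1, p.2 - k * q.2) : ℤ × ℤ) ∈ Lm)
    (HL : ∀ p ∈ Ll, ∀ q (k : ℤ), ((q ∈ Ls ∧ 4 ∣ k) ∨ (q ∈ Lm ∧ 2 ∣ k) ∨ (q ∈ Ll ∧ 2 ∣ k)) →
      ((p.1 - k * q.1, p.2 - k * q.2) : ℤ × ℤ) ∈ Ll)
    {α : V l} (hα : α ∈ Rgen l Ls Lm Ll) :
    reflV l α '' Rgen l Ls Lm Ll = Rgen l Ls Lm Ll := by
  apply Set.Subset.antisymm
  · rintro x ⟨β, hβ, rfl⟩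
    exact reflect_closed HS HM HL hα hβ
  · intro x hx
    exact ⟨reflV l α x, reflect_closed HS HM HL hα hx,
      reflV_involutive α x (Rgen_nonisotropic hα)⟩

theorem isERS_Rgen (hl : 1 ≤ l)
    (HS : ∀ p ∈ Ls, ∀ q (k : ℤ), ((q ∈ Ls ∧ 2 ∣ k) ∨ q ∈ Lm ∨ q ∈ Ll) →
      ((p.1 - k * q.1, p.2 - k * q.2) : ℤ × ℤ) ∈ Ls)
    (HM : ∀ p ∈ Lm, ∀ q (k : ℤ), ((q ∈ Ls ∧ 2 ∣ k) ∨ q ∈ Lm ∨ q ∈ Ll) →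
      ((p.1 - k * q.1, p.2 - k * q.2) : ℤ × ℤ) ∈ Lm)
    (HL : ∀ p ∈ Ll, ∀ q (k : ℤ), ((q ∈ Ls ∧ 4 ∣ k) ∨ (q ∈ Lm ∧ 2 ∣ k) ∨ (q ∈ Ll ∧ 2 ∣ k)) →
      ((p.1 - k * q.1, p.2 - k * q.2) : ℤ × ℤ) ∈ Ll)
    (h10 : ((1,0) : ℤ×ℤ) ∈ Ls) (h01 : ((0,1) : ℤ×ℤ) ∈ Ls) (h11 : ((1,1) : ℤ×ℤ) ∈ Ls)
    (hLm : Lm.Nonempty) (hLl : Ll.Nonempty) :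
    IsERS l (Rgen l Ls Lm Ll) where
  discrete := fun _ hx => Rgen_discrete hx
  spans := Rgen_spans hl h10 h01 h11
  nonisotropic := fun _ hα => Rgen_nonisotropic hα
  integral := fun _ hα _ hβ => Rgen_integral hα hβ
  reflects := fun _ hα => Rgen_reflects HS HM HL hα
  irred := Rgen_irred hl hLm hLl

end StarAux
namespace StarAux
variable {l : ℕ}

lemma L11_shift {p : ℤ × ℤ} (hp : p ∈ L11) {a b : ℤ} (ha : 2 ∣ a) (hb : 2 ∣ b) :
    ((p.1 - a, p.2 - b) : ℤ × ℤ) ∈ L11 := by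
  have hp' : (2:ℤ) ∣ (p.1 - 1) * (p.2 - 1) := hp
  rcases ((Int.prime_two.dvd_mul).mp hp') with h | h
  · exact Dvd.dvd.mul_right (by omega : (2:ℤ) ∣ (p.1 - a - 1)) _
  · exact Dvd.dvd.mul_left (by omega : (2:ℤ) ∣ (p.2 - b - 1)) _

lemma mem_LatD {ka kb : ℤ} {p : ℤ × ℤ} (h1 : ka ∣ p.1) (h2 : kb ∣ p.2) : p ∈ LatD ka kb :=
  ⟨h1, h2⟩

-- hypotheses for instance 1 : Ls = Lm = LatD 1 1, Ll = L11
lemma HS1 : ∀ p ∈ (LatD 1 1 : Set (ℤ×ℤ)), ∀ q (k : ℤ),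
    ((q ∈ LatD 1 1 ∧ 2 ∣ k) ∨ q ∈ LatD 1 1 ∨ q ∈ L11) →
    ((p.1 - k * q.1, p.2 - k * q.2) : ℤ × ℤ) ∈ LatD 1 1 :=
  fun _ _ _ _ _ => ⟨one_dvd _, one_dvd _⟩

lemma HL1 : ∀ p ∈ L11, ∀ q (k : ℤ),
    ((q ∈ LatD 1 1 ∧ 4 ∣ k) ∨ (q ∈ LatD 1 1 ∧ 2 ∣ k) ∨ (q ∈ L11 ∧ 2 ∣ k)) →
    ((p.1 - k * q.1, p.2 - k * q.2) : ℤ × ℤ) ∈ L11 := by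
  rintro p hp q k (⟨_, hk⟩ | ⟨_, hk⟩ | ⟨_, hk⟩) <;>
    exact L11_shift hp ((by omega : (2:ℤ) ∣ k).mul_right q.1)
      ((by omega : (2:ℤ) ∣ k).mul_right q.2)

lemma Hred1 : ∀ p ∈ (LatD 1 1 : Set (ℤ×ℤ)), ((p.1 + p.1, p.2 + p.2) : ℤ×ℤ) ∉ L11 := by
  intro p _ hc
  have hc' : (2:ℤ) ∣ (p.1 + p.1 - 1) * (p.2 + p.2 - 1) := hc
  rcases ((Int.prime_two.dvd_mul).mp hc') with h | h <;> omega

-- hypotheses for instance 2 : Ls = L11, Lm = LatD 2 2, Ll = LatD 4 4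
lemma HS2 : ∀ p ∈ L11, ∀ q (k : ℤ),
    ((q ∈ L11 ∧ 2 ∣ k) ∨ q ∈ LatD 2 2 ∨ q ∈ LatD 4 4) →
    ((p.1 - k * q.1, p.2 - k * q.2) : ℤ × ℤ) ∈ L11 := by
  rintro p hp q k (⟨_, hk⟩ | ⟨hq1, hq2⟩ | ⟨hq1, hq2⟩)
  · exact L11_shift hp (hk.mul_right q.1) (hk.mul_right q.2)
  · exact L11_shift hp (hq1.mul_left k) (hq2.mul_left k)
  · exact L11_shift hp ((by omega : (2:ℤ) ∣ q.1).mul_left k)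
      ((by omega : (2:ℤ) ∣ q.2).mul_left k)

lemma HM2 : ∀ p ∈ (LatD 2 2 : Set (ℤ×ℤ)), ∀ q (k : ℤ),
    ((q ∈ L11 ∧ 2 ∣ k) ∨ q ∈ LatD 2 2 ∨ q ∈ LatD 4 4) →
    ((p.1 - k * q.1, p.2 - k * q.2) : ℤ × ℤ) ∈ LatD 2 2 := by
  rintro p ⟨hp1, hp2⟩ q k (⟨_, hk⟩ | ⟨hq1, hq2⟩ | ⟨hq1, hq2⟩) <;>
    exact ⟨dvd_sub hp1 (by first
      | exact hk.mul_right q.1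
      | exact hq1.mul_left k
      | exact ((by omega : (2:ℤ) ∣ q.1).mul_left k)),
    dvd_sub hp2 (by first
      | exact hk.mul_right q.2
      | exact hq2.mul_left k
      | exact ((by omega : (2:ℤ) ∣ q.2).mul_left k))⟩

lemma HL2 : ∀ p ∈ (LatD 4 4 : Set (ℤ×ℤ)), ∀ q (k : ℤ),
    ((q ∈ L11 ∧ 4 ∣ k) ∨ (q ∈ LatD 2 2 ∧ 2 ∣ k) ∨ (q ∈ LatD 4 4 ∧ 2 ∣ k)) →
    ((p.1 - k * q.1, p.2 - k * q.2) : ℤ × ℤ) ∈ LatD 4 4 := by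
  rintro p ⟨hp1, hp2⟩ q k (⟨_, hk⟩ | ⟨⟨hq1, hq2⟩, hk⟩ | ⟨⟨hq1, hq2⟩, hk⟩)
  · exact ⟨dvd_sub hp1 (hk.mul_right q.1), dvd_sub hp2 (hk.mul_right q.2)⟩
  · obtain ⟨k', rfl⟩ := hk
    obtain ⟨a, ha⟩ := hq1
    obtain ⟨b, hb⟩ := hq2
    exact ⟨dvd_sub hp1 ⟨k' * a, by rw [ha]; ring⟩, dvd_sub hp2 ⟨k' * b, by rw [hb]; ring⟩⟩
  · exact ⟨dvd_sub hp1 (hq1.mul_left k), dvd_sub hp2 (hq2.mul_left k)⟩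

lemma Hred2 : ∀ p ∈ L11, ((p.1 + p.1, p.2 + p.2) : ℤ×ℤ) ∉ LatD 4 4 := by
  rintro p hp ⟨h1, h2⟩
  have hp' : (2:ℤ) ∣ (p.1 - 1) * (p.2 - 1) := hp
  rcases ((Int.prime_two.dvd_mul).mp hp') with h | h <;> omega

lemma mem_L11_10 : ((1,0) : ℤ×ℤ) ∈ L11 := ⟨0, by norm_num⟩
lemma mem_L11_01 : ((0,1) : ℤ×ℤ) ∈ L11 := ⟨0, by norm_num⟩
lemma mem_L11_11 : ((1,1) : ℤ×ℤ) ∈ L11 := ⟨0, by norm_num⟩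

end StarAux
namespace StarAux
variable {l : ℕ}

lemma av_ne_zero : av l ≠ 0 := by
  intro h
  have := congrFun h (Fin.natAdd l 0)
  simp at this

lemma marking_Rgen {Ls Lm Ll : Set (ℤ × ℤ)} (hl : 1 ≤ l)
    (h01 : ((0,1) : ℤ×ℤ) ∈ Ls) (h11 : ((1,1) : ℤ×ℤ) ∈ Ls) :
    IsMarking l (Rgen l Ls Lm Ll) (Ga l) := by
  refine ⟨Submodule.span_mono (Set.singleton_subset_iff.mpr (Set.mem_insert _ _)),
    finrank_span_singleton av_ne_zero, av l, av_ne_zero,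
    Submodule.subset_span rfl, ?_⟩
  set i0 : Fin l := ⟨0, hl⟩
  have heq : av l = (emb l (Pi.single i0 1) + rad l (1,1))
      - (emb l (Pi.single i0 1) + rad l (0,1)) := by
    simp only [rad]; push_cast; module
  rw [heq]
  exact AddSubgroup.sub_mem _
    (AddSubgroup.subset_closure (mem_Rgen_s (single_mem_NS i0) h11))
    (AddSubgroup.subset_closure (mem_Rgen_s (single_mem_NS i0) h01))

def LatB (kb : ℤ) : Set (ℤ × ℤ) := {p | p.1 = 0 ∧ kb ∣ p.2}

lemma add_Zb (N : Set (Fin l → ℤ)) (BC : Set (V l))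
    (hBC : BC = {x | ∃ f ∈ N, x = emb l f}) (kb : ℤ) :
    BC + Zb l kb = mixS l N (LatB kb) := by
  ext x
  constructor
  · intro hx
    obtain ⟨γ, hγ, w, hw, rfl⟩ := Set.mem_add.mp hx
    obtain ⟨f, hf, rfl⟩ := hBC ▸ hγ
    obtain ⟨n, rfl⟩ := hw
    exact ⟨f, hf, (0, kb * n), ⟨rfl, dvd_mul_right _ _⟩, by rw [rad]; push_cast; module⟩
  · rintro ⟨f, hf, p, ⟨h0, ⟨n, hn⟩⟩, rfl⟩
    refine Set.mem_add.mpr ⟨emb l f, hBC ▸ ⟨f, hf, rfl⟩,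
      ((kb * n : ℤ) : ℝ) • bv l, ⟨n, rfl⟩, ?_⟩
    rw [rad, h0, hn]; push_cast; module

lemma Aff_eq (X : AffType) :
    Aff l X = Rgen l (LatB 1) (LatB (tfm X)) (LatB (tfl X)) := by
  rw [Aff, AffS, AffM, AffL, Rgen, add_Zb (NS l) (BCs l) BCs_eq',
    add_Zb (NM l) (BCm l) BCm_eq', add_Zb (NL l) (BCl l) BCl_eq']

lemma mkQ_eq_of_rad (f : Fin l → ℤ) (p p' : ℤ × ℤ) (h2 : p.2 = p'.2) :
    (Ga l).mkQ (emb l f + rad l p) = (Ga l).mkQ (emb l f + rad l p') := by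
  rw [Submodule.mkQ_apply, Submodule.mkQ_apply, Submodule.Quotient.eq]
  have heq : (emb l f + rad l p) - (emb l f + rad l p')
      = ((p.1 - p'.1 : ℤ) : ℝ) • av l := by
    simp only [rad, h2]; push_cast; module
  rw [heq]
  exact Submodule.smul_mem _ _ (Submodule.subset_span rfl)

lemma mkQ_image_mixS (N : Set (Fin l → ℤ)) (L L' : Set (ℤ × ℤ))
    (h : ∀ p ∈ L, ∃ p' ∈ L', p'.2 = p.2) (h' : ∀ p' ∈ L', ∃ p ∈ L, p.2 = p'.2) :
    (Ga l).mkQ '' mixS l N L = (Ga l).mkQ '' mixS l N L' := by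
  apply Set.Subset.antisymm
  · rintro _ ⟨x, ⟨f, hf, p, hp, rfl⟩, rfl⟩
    obtain ⟨p', hp', h2⟩ := h p hp
    exact ⟨emb l f + rad l p', ⟨f, hf, p', hp', rfl⟩, mkQ_eq_of_rad f p' p h2⟩
  · rintro _ ⟨x, ⟨f, hf, p', hp', rfl⟩, rfl⟩
    obtain ⟨p, hp, h2⟩ := h' p' hp'
    exact ⟨emb l f + rad l p, ⟨f, hf, p, hp, rfl⟩, mkQ_eq_of_rad f p p' h2⟩

lemma mkQ_image_Rgen (Ls Lm Ll Ls' Lm' Ll' : Set (ℤ × ℤ))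
    (hs : ∀ p ∈ Ls, ∃ p' ∈ Ls', p'.2 = p.2) (hs' : ∀ p' ∈ Ls', ∃ p ∈ Ls, p.2 = p'.2)
    (hm : ∀ p ∈ Lm, ∃ p' ∈ Lm', p'.2 = p.2) (hm' : ∀ p' ∈ Lm', ∃ p ∈ Lm, p.2 = p'.2)
    (hll : ∀ p ∈ Ll, ∃ p' ∈ Ll', p'.2 = p.2) (hll' : ∀ p' ∈ Ll', ∃ p ∈ Ll, p.2 = p'.2) :
    (Ga l).mkQ '' Rgen l Ls Lm Ll = (Ga l).mkQ '' Rgen l Ls' Lm' Ll' := by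
  rw [Rgen, Rgen, Set.image_union, Set.image_union, Set.image_union, Set.image_union,
    mkQ_image_mixS (NS l) Ls Ls' hs hs', mkQ_image_mixS (NM l) Lm Lm' hm hm',
    mkQ_image_mixS (NL l) Ll Ll' hll hll']

lemma latD11_to_latB : ∀ p ∈ (LatD 1 1 : Set (ℤ×ℤ)), ∃ p' ∈ LatB 1, p'.2 = p.2 :=
  fun p _ => ⟨(0, p.2), ⟨rfl, one_dvd _⟩, rfl⟩

lemma latB_to_latD11 : ∀ p' ∈ (LatB 1 : Set (ℤ×ℤ)), ∃ p ∈ LatD 1 1, p.2 = p'.2 :=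
  fun p' _ => ⟨p', ⟨one_dvd _, one_dvd _⟩, rfl⟩

lemma L11_to_latB : ∀ p ∈ L11, ∃ p' ∈ (LatB 1 : Set (ℤ×ℤ)), p'.2 = p.2 :=
  fun p _ => ⟨(0, p.2), ⟨rfl, one_dvd _⟩, rfl⟩

lemma latB_to_L11 : ∀ p' ∈ (LatB 1 : Set (ℤ×ℤ)), ∃ p ∈ L11, p.2 = p'.2 :=
  fun p' _ => ⟨(1, p'.2), by show (2:ℤ) ∣ (1 - 1) * (p'.2 - 1); norm_num, rfl⟩

lemma latD_to_latB (k : ℤ) : ∀ p ∈ (LatD k k : Set (ℤ×ℤ)), ∃ p' ∈ LatB k, p'.2 = p.2 :=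
  fun p hp => ⟨(0, p.2), ⟨rfl, hp.2⟩, rfl⟩

lemma latB_to_latD (k : ℤ) : ∀ p' ∈ (LatB k : Set (ℤ×ℤ)), ∃ p ∈ LatD k k, p.2 = p'.2 :=
  fun p' hp' => ⟨(0, p'.2), ⟨dvd_zero _, hp'.2⟩, rfl⟩

end StarAux
namespace StarAux
variable {l : ℕ}

lemma single_two_even (i : Fin l) (j : Fin l) : (2:ℤ) ∣ (Pi.single i 2 : Fin l → ℤ) j := by
  rcases eq_or_ne j i with rfl | hne
  · simp
  · simp [Pi.single_apply, hne]

lemma single_two_mem_NL (i : Fin l) : (Pi.single i 2 : Fin l → ℤ) ∈ NL l :=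
  ⟨by rw [sum_single_sq]; norm_num, single_two_even i⟩

lemma quot_nonred_aux {Ls Lm Ll : Set (ℤ × ℤ)} (hl : 1 ≤ l)
    (pα pβ : ℤ × ℤ) (hpα : pα ∈ Ls) (hpβ : pβ ∈ Ll)
    (hdiff : ∃ c : ℝ, rad l pβ - (2:ℝ) • rad l pα = c • av l) :
    QuotNonReduced l (Rgen l Ls Lm Ll) (Ga l) := by
  set i0 : Fin l := ⟨0, hl⟩
  refine ⟨emb l (Pi.single i0 1) + rad l pα, mem_Rgen_s (single_mem_NS i0) hpα,
    emb l (Pi.single i0 2) + rad l pβ, mem_Rgen_l (single_two_mem_NL i0) hpβ, ?_⟩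
  obtain ⟨c, hc⟩ := hdiff
  have h1 : (2:ℝ) • (Ga l).mkQ (emb l (Pi.single i0 1) + rad l pα)
      = (Ga l).mkQ ((2:ℝ) • (emb l (Pi.single i0 1) + rad l pα)) :=
    (map_smul (Ga l).mkQ (2:ℝ) _).symm
  rw [h1, Submodule.mkQ_apply, Submodule.mkQ_apply, Submodule.Quotient.eq]
  have heq : (emb l (Pi.single i0 2) + rad l pβ)
      - (2:ℝ) • (emb l (Pi.single i0 1) + rad l pα)
      = rad l pβ - (2:ℝ) • rad l pα := by
    rw [emb_single, emb_single]
    push_cast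
    module
  rw [heq, hc]
  exact Submodule.smul_mem _ _ (Submodule.subset_span rfl)

end StarAux


end

noncomputable section

/-- **Well-definedness of the reduced ∗-types (Azam's systems)** `BC_l^{(1,1)∗}` and
`BC_l^{(4,4)∗}`. -/
theorem reduced_star_well_defined {l : ℕ} (hl : 1 ≤ l) :
    (IsERS l (RBC11star l) ∧ IsReducedRS l (RBC11star l) ∧
      IsMarking l (RBC11star l) (Ga l) ∧
      (Ga l).mkQ '' RBC11star l = (Ga l).mkQ '' Aff l .BCC ∧
      QuotNonReduced l (RBC11star l) (Ga l)) ∧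
    (IsERS l (RBC44star l) ∧ IsReducedRS l (RBC44star l) ∧
      IsMarking l (RBC44star l) (Ga l) ∧
      (Ga l).mkQ '' RBC44star l = (Ga l).mkQ '' Aff l .CvBC ∧
      QuotNonReduced l (RBC44star l) (Ga l)) := by
  have triv : ∀ p : ℤ × ℤ, p ∈ StarAux.LatD 1 1 := fun p => ⟨one_dvd _, one_dvd _⟩
  constructor
  · rw [StarAux.RBC11star_eq, StarAux.Aff_eq]
    simp only [tfm, tfl]
    refine ⟨?_, ?_, ?_, ?_, ?_⟩
    · exact StarAux.isERS_Rgen hl StarAux.HS1 StarAux.HS1 StarAux.HL1 (triv _) (triv _)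
        (triv _) ⟨(0,0), triv _⟩ ⟨(1,1), StarAux.mem_L11_11⟩
    · exact StarAux.Rgen_reduced StarAux.Hred1
    · exact StarAux.marking_Rgen hl (triv _) (triv _)
    · exact StarAux.mkQ_image_Rgen _ _ _ _ _ _ StarAux.latD11_to_latB StarAux.latB_to_latD11
        StarAux.latD11_to_latB StarAux.latB_to_latD11 StarAux.L11_to_latB StarAux.latB_to_L11
    · refine StarAux.quot_nonred_aux hl (0,0) (1,0) (triv _) StarAux.mem_L11_10 ⟨1, ?_⟩
      simp only [StarAux.rad]
      push_cast
      module
  · rw [StarAux.RBC44star_eq, StarAux.Aff_eq]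
    simp only [tfm, tfl]
    refine ⟨?_, ?_, ?_, ?_, ?_⟩
    · exact StarAux.isERS_Rgen hl StarAux.HS2 StarAux.HM2 StarAux.HL2 StarAux.mem_L11_10
        StarAux.mem_L11_01 StarAux.mem_L11_11
        ⟨(0,0), ⟨dvd_zero _, dvd_zero _⟩⟩ ⟨(0,0), ⟨dvd_zero _, dvd_zero _⟩⟩
    · exact StarAux.Rgen_reduced StarAux.Hred2
    · exact StarAux.marking_Rgen hl StarAux.mem_L11_01 StarAux.mem_L11_11
    · exact StarAux.mkQ_image_Rgen _ _ _ _ _ _ StarAux.L11_to_latB StarAux.latB_to_L11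
        (StarAux.latD_to_latB 2) (StarAux.latB_to_latD 2)
        (StarAux.latD_to_latB 4) (StarAux.latB_to_latD 4)
    · refine StarAux.quot_nonred_aux hl (1,0) (0,0) StarAux.mem_L11_10
        ⟨dvd_zero _, dvd_zero _⟩ ⟨-2, ?_⟩
      simp only [StarAux.rad]
      push_cast
      module

end
end
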